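/- arXiv:2405.16022 — 14 statements merged into one kernel-verified Lean document; each statement's English description precedes it below -/
import Mathlib

section
/- For any ring R, the Zhou radical δ(R) is a semiprime ideal: if a ∈ R satisfies aRa ⊆ δ(R), then a ∈ δ(R). -/
open MulOpposite

/-- A right ideal `I` of `R` is essential if it intersects every nonzero right ideal
nontrivially. Right ideals are formalized as submodules of `R` over `Rᵐᵒᵖ`. -/
def IsEssentialRI (R : Type*) [Ring R] (I : Submodule Rᵐᵒᵖ R) : Prop :=
  ∀ K : Submodule Rᵐᵒᵖ R, K ≠ ⊥ → I ⊓ K ≠ ⊥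

/-- The Zhou radical of a ring `R`: the intersection of all essential maximal right
ideals of `R` (all of `R` if there are none). -/
def zhouRadical (R : Type*) [Ring R] : Set R :=
  {x : R | ∀ I : Submodule Rᵐᵒᵖ R, IsCoatom I → IsEssentialRI R I → x ∈ I}

/-- For any ring `R`, the Zhou radical `δ(R)` is a semiprime ideal:
if `aRa ⊆ δ(R)` then `a ∈ δ(R)`. -/
theorem zhouRadical_semiprime (R : Type*) [Ring R] (a : R)
    (h : ∀ r : R, a * r * a ∈ zhouRadical R) : a ∈ zhouRadical R := by
  intro I hco hess
  by_contra ha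
  have hmem : a ∈ Submodule.span Rᵐᵒᵖ ({a} : Set R) := Submodule.mem_span_singleton_self a
  have hlt : I < I ⊔ Submodule.span Rᵐᵒᵖ ({a} : Set R) := by
    refine lt_of_le_of_ne le_sup_left fun he => ha ?_
    rw [he]; exact (le_sup_right : _ ≤ I ⊔ _) hmem
  have htop : I ⊔ Submodule.span Rᵐᵒᵖ ({a} : Set R) = ⊤ := hco.2 _ hlt
  have h1 : (1 : R) ∈ I ⊔ Submodule.span Rᵐᵒᵖ ({a} : Set R) := htop ▸ Submodule.mem_top
  rcases Submodule.mem_sup.mp h1 with ⟨i, hi, s, hs, hsum⟩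
  rcases Submodule.mem_span_singleton.mp hs with ⟨c, rfl⟩
  have key : a = i * a + a * c.unop * a := by
    have : (1 : R) * a = (i + c • a) * a := by rw [hsum]
    simpa [add_mul, mul_assoc, MulOpposite.smul_eq_mul_unop] using this
  apply ha
  rw [key]
  exact I.add_mem ((Submodule.smul_mem I (op a) hi : i * a ∈ I)) (h c.unop I hco hess)
end

section
/- Let R be a ring and I an ideal of R. Then δ(I) ⊆ I ∩ δ(R), viewing I as a ring (possibly without identity) with its Zhou radical δ(I) defined via essential maximal right ideals of I. -/
open MulOpposite

/-- `J` is a right ideal of the (possibly non-unital) ring given by the subset `I` of `R`: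
`J ⊆ I`, `J` is an additive subgroup, and `J` is closed under right multiplication by
elements of `I`. -/
def IsRI {R : Type*} [Ring R] (I J : Set R) : Prop :=
  J ⊆ I ∧ (0 : R) ∈ J ∧ (∀ a ∈ J, ∀ b ∈ J, a + b ∈ J) ∧ (∀ a ∈ J, -a ∈ J) ∧
    ∀ a ∈ J, ∀ y ∈ I, a * y ∈ J

/-- `J` is a maximal right ideal of the ring given by the subset `I`. -/
def IsMaxRI {R : Type*} [Ring R] (I J : Set R) : Prop :=
  IsRI I J ∧ J ≠ I ∧ ∀ K : Set R, IsRI I K → J ⊆ K → K = J ∨ K = I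

/-- `J` is an essential right ideal of the ring given by the subset `I`: it intersects
every nonzero right ideal of `I` nontrivially. -/
def IsEssRI {R : Type*} [Ring R] (I J : Set R) : Prop :=
  ∀ K : Set R, IsRI I K → K ≠ ({0} : Set R) → J ∩ K ≠ ({0} : Set R)

/-- The Zhou radical of the (possibly non-unital) ring given by the subset `I` of `R`:
the intersection of all essential maximal right ideals of `I`. -/
def zhouSet {R : Type*} [Ring R] (I : Set R) : Set R :=
  {x : R | x ∈ I ∧ ∀ J : Set R, IsMaxRI I J → IsEssRI I J → x ∈ J}

/-- Let `I` be a (two-sided) ideal of `R`. Then `δ(I) ⊆ I ∩ δ(R)`, where `δ(I)` is the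
Zhou radical of `I` viewed as a ring possibly without identity. -/
theorem zhouSet_ideal_subset (R : Type*) [Ring R] (I : Set R)
    (h0 : (0 : R) ∈ I) (hadd : ∀ a ∈ I, ∀ b ∈ I, a + b ∈ I) (hneg : ∀ a ∈ I, -a ∈ I)
    (hmulr : ∀ a ∈ I, ∀ r : R, a * r ∈ I) (hmull : ∀ a ∈ I, ∀ r : R, r * a ∈ I) :
    zhouSet I ⊆ I ∩ zhouRadical R := by
  intro x hx
  refine ⟨hx.1, ?_⟩
  intro M hM hMe
  by_cases hIM : I ⊆ M
  · exact hIM hx.1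
  -- two general facts about spans of right ideals of I
  have hspanI : ∀ P : Set R, P ⊆ I → ∀ z ∈ Submodule.span Rᵐᵒᵖ P, z ∈ I := by
    intro P hPI z hz
    induction hz using Submodule.span_induction with
    | mem w hw => exact hPI hw
    | zero => exact h0
    | add u v hu hv ihu ihv => exact hadd _ ihu _ ihv
    | smul r u hu ihu =>
        rw [MulOpposite.smul_eq_mul_unop]
        exact hmulr _ ihu _
  have hspanmul : ∀ P : Set R, IsRI I P →
      ∀ z ∈ Submodule.span Rᵐᵒᵖ P, ∀ y ∈ I, z * y ∈ P := by
    intro P hP z hz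
    induction hz using Submodule.span_induction with
    | mem w hw => exact fun y hy => hP.2.2.2.2 _ hw y hy
    | zero => intro y hy; simpa using hP.2.1
    | add u v hu hv ihu ihv =>
        intro y hy
        rw [add_mul]; exact hP.2.2.1 _ (ihu y hy) _ (ihv y hy)
    | smul r u hu ihu =>
        intro y hy
        rw [MulOpposite.smul_eq_mul_unop, mul_assoc]
        exact ihu _ (hmull y hy _)
  -- decomposition of 1 from maximality of M
  have key : ∀ P : Set R, (∃ a ∈ P, a ∉ M) →
      ∃ m ∈ M, ∃ s ∈ Submodule.span Rᵐᵒᵖ P, m + s = 1 := by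
    intro P ⟨a, haP, haM⟩
    have hlt : M < M ⊔ Submodule.span Rᵐᵒᵖ P := by
      refine lt_of_le_of_ne le_sup_left fun h => haM ?_
      have h1 : a ∈ M ⊔ Submodule.span Rᵐᵒᵖ P :=
        Submodule.mem_sup_right (Submodule.subset_span haP)
      rwa [← h] at h1
    have h1 : (1 : R) ∈ M ⊔ Submodule.span Rᵐᵒᵖ P :=
      (hM.2 _ hlt) ▸ Submodule.mem_top
    exact Submodule.mem_sup.mp h1
  set J : Set R := I ∩ (M : Set R) with hJdef
  have hJmem : ∀ y ∈ I, ∀ m ∈ M, m * y ∈ J := by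
    intro y hy m hm
    refine ⟨hmull y hy m, ?_⟩
    have := M.smul_mem (op y) hm
    rwa [op_smul_eq_mul] at this
  have hJRI : IsRI I J :=
    ⟨Set.inter_subset_left, ⟨h0, M.zero_mem⟩,
      fun a ha b hb => ⟨hadd _ ha.1 _ hb.1, M.add_mem ha.2 hb.2⟩,
      fun a ha => ⟨hneg _ ha.1, M.neg_mem ha.2⟩,
      fun a ha y hy => hJmem y hy a ha.2⟩
  obtain ⟨a₀, ha₀I, ha₀M⟩ := Set.not_subset.mp hIM
  -- maximality of J in I
  have hJmax : IsMaxRI I J := by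
    refine ⟨hJRI, fun h => ha₀M (h ▸ ha₀I : a₀ ∈ J).2, fun K hK hJK => ?_⟩
    by_cases hKJ : K ⊆ J
    · exact Or.inl (Set.Subset.antisymm hKJ hJK)
    · refine Or.inr ?_
      obtain ⟨a, haK, haJ⟩ := Set.not_subset.mp hKJ
      have haM : a ∉ M := fun h => haJ ⟨hK.1 haK, h⟩
      obtain ⟨m, hm, s, hs, hms⟩ := key K ⟨a, haK, haM⟩
      refine Set.Subset.antisymm hK.1 fun y hy => ?_
      have hmy : m * y ∈ K := hJK (hJmem y hy m hm)
      have hsy : s * y ∈ K := hspanmul K hK s hs y hy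
      have hsum := hK.2.2.1 _ hmy _ hsy
      rwa [show m * y + s * y = y from by rw [← add_mul, hms, one_mul]] at hsum
  -- essentiality of J in I
  have hJess : IsEssRI I J := by
    intro P hP hPne hcon
    have hPsub : ¬ P ⊆ ({0} : Set R) := fun h =>
      hPne (Set.Subset.antisymm h (Set.singleton_subset_iff.mpr hP.2.1))
    obtain ⟨p₀, hp₀P, hp₀⟩ := Set.not_subset.mp hPsub
    have hp₀0 : p₀ ≠ 0 := fun h => hp₀ (by simp [h])
    have hp₀M : p₀ ∉ M := by
      intro h
      have : p₀ ∈ J ∩ P := ⟨⟨hP.1 hp₀P, h⟩, hp₀P⟩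
      rw [hcon] at this
      exact hp₀0 this
    obtain ⟨m, hm, t, ht, hmt⟩ := key P ⟨p₀, hp₀P, hp₀M⟩
    -- t is a left identity on P
    have htid : ∀ p ∈ P, t * p = p := by
      intro p hp
      have hpI : p ∈ I := hP.1 hp
      have htp : t * p ∈ P := hspanmul P hP t ht p hpI
      have hmp : m * p ∈ J := hJmem p hpI m hm
      have hmpP : m * p ∈ P := by
        have heq : m * p = p + -(t * p) := by
          have : m * p + t * p = p := by rw [← add_mul, hmt, one_mul]
          linear_combination (norm := abel) this
        rw [heq]
        exact hP.2.2.1 _ hp _ (hP.2.2.2.1 _ htp)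
      have : m * p = 0 := by
        have : m * p ∈ J ∩ P := ⟨hmp, hmpP⟩
        rw [hcon] at this; exact this
      have := congrArg (· + t * p) (this)
      simpa [← add_mul, hmt] using this.symm
    -- t is a left identity on span P
    have htspan : ∀ z ∈ Submodule.span Rᵐᵒᵖ P, t * z = z := by
      intro z hz
      induction hz using Submodule.span_induction with
      | mem w hw => exact htid w hw
      | zero => simp
      | add u v hu hv ihu ihv => rw [mul_add, ihu, ihv]
      | smul r u hu ihu =>
          rw [MulOpposite.smul_eq_mul_unop, ← mul_assoc, ihu]
    -- use essentiality of M
    have hspanbot : Submodule.span Rᵐᵒᵖ P ≠ ⊥ := by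
      intro h
      exact hp₀0 ((Submodule.mem_bot _).mp (h ▸ Submodule.subset_span hp₀P))
    have hne := hMe _ hspanbot
    obtain ⟨z, hz, hz0⟩ := (Submodule.ne_bot_iff _).mp hne
    have hzM : z ∈ M := hz.1
    have hzspan : z ∈ Submodule.span Rᵐᵒᵖ P := hz.2
    have hzI : z ∈ I := hspanI P hP.1 z hzspan
    have hzP : z ∈ P := by
      have := hspanmul P hP t ht z hzI
      rwa [htspan z hzspan] at this
    have : z ∈ J ∩ P := ⟨⟨hzI, hzM⟩, hzP⟩
    rw [hcon] at this
    exact hz0 this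
  exact (hx.2 J hJmax hJess).2
end

section
/- Let R be a ring and I a maximal two-sided ideal of R that is not essential as a right ideal. Then δ(I) = I ∩ δ(R). -/
open MulOpposite

/-- A right `R`-module `M` (a module over `Rᵐᵒᵖ`) is singular if every element has an
essential annihilator right ideal. -/
def IsSingularMod (R : Type*) [Ring R] (M : Type*) [AddCommGroup M] [Module Rᵐᵒᵖ M] : Prop :=
  ∀ m : M, IsEssRI (Set.univ : Set R) {s : R | (MulOpposite.op s) • m = 0}

/-- A submodule `N` of a right `R`-module `M` is δ-small if whenever `N + K = M` with
`M/K` singular, then `K = M`. -/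
def IsDeltaSmall (R : Type*) [Ring R] {M : Type*} [AddCommGroup M] [Module Rᵐᵒᵖ M]
    (N : Submodule Rᵐᵒᵖ M) : Prop :=
  ∀ K : Submodule Rᵐᵒᵖ M, N ⊔ K = ⊤ → IsSingularMod R (M ⧸ K) → K = ⊤

/-- The Zhou radical of a right `R`-module `M`: the sum of all δ-small submodules. -/
def deltaMod (R : Type*) [Ring R] (M : Type*) [AddCommGroup M] [Module Rᵐᵒᵖ M] :
    Submodule Rᵐᵒᵖ M :=
  sSup {N : Submodule Rᵐᵒᵖ M | IsDeltaSmall R N}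

section Aux
variable {R : Type*} [Ring R]

lemma set_ne_singleton_zero {A : Set R} (h0 : (0:R) ∈ A) :
    A ≠ ({0} : Set R) ↔ ∃ x ∈ A, x ≠ 0 := by
  constructor
  · intro h
    by_contra hc
    push_neg at hc
    apply h
    ext y
    simp only [Set.mem_singleton_iff]
    exact ⟨fun hy => hc y hy, fun hy => hy ▸ h0⟩
  · rintro ⟨x, hx, hx0⟩ h
    rw [h] at hx
    exact hx0 hx

lemma isRI_coe (K : Submodule Rᵐᵒᵖ R) : IsRI (Set.univ : Set R) (K : Set R) :=
  ⟨Set.subset_univ _, K.zero_mem, fun a ha b hb => K.add_mem ha hb,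
   fun a ha => K.neg_mem ha, fun a ha y _ => by
     have := K.smul_mem (op y) ha
     rwa [op_smul_eq_mul] at this⟩

lemma essRI_mono {A B : Set R} (h0 : (0:R) ∈ A) (hAB : A ⊆ B) (hA : IsEssRI Set.univ A) :
    IsEssRI Set.univ B := by
  intro K hK hK0
  have h := hA K hK hK0
  rw [set_ne_singleton_zero (Set.mem_inter h0 hK.2.1)] at h
  rw [set_ne_singleton_zero (Set.mem_inter (hAB h0) hK.2.1)]
  obtain ⟨x, hx, hx0⟩ := h
  exact ⟨x, ⟨hAB hx.1, hx.2⟩, hx0⟩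

lemma essentialRI_of_essRI {J : Submodule Rᵐᵒᵖ R} (h : IsEssRI Set.univ (J : Set R)) :
    IsEssentialRI R J := by
  intro K hK
  rw [Submodule.ne_bot_iff] at hK ⊢
  have hKne : (K : Set R) ≠ ({0} : Set R) := by
    rw [set_ne_singleton_zero K.zero_mem]
    obtain ⟨x, hx, hx0⟩ := hK
    exact ⟨x, hx, hx0⟩
  have h2 := h (K : Set R) (isRI_coe K) hKne
  rw [set_ne_singleton_zero (Set.mem_inter J.zero_mem K.zero_mem)] at h2
  obtain ⟨x, ⟨hxJ, hxK⟩, hx0⟩ := h2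
  exact ⟨x, Submodule.mem_inf.2 ⟨hxJ, hxK⟩, hx0⟩

lemma quot_ann_eq {M : Type*} [AddCommGroup M] [Module Rᵐᵒᵖ M] (K : Submodule Rᵐᵒᵖ M)
    (x : M) :
    {s : R | op s • (Submodule.Quotient.mk x : M ⧸ K) = 0} = {s : R | op s • x ∈ K} := by
  ext s
  rw [Set.mem_setOf_eq, Set.mem_setOf_eq, ← Submodule.Quotient.mk_smul,
    Submodule.Quotient.mk_eq_zero]

lemma singular_quotient_mono {M : Type*} [AddCommGroup M] [Module Rᵐᵒᵖ M]
    {K L : Submodule Rᵐᵒᵖ M} (hKL : K ≤ L) (h : IsSingularMod R (M ⧸ K)) :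
    IsSingularMod R (M ⧸ L) := by
  intro m
  obtain ⟨x, rfl⟩ := Submodule.Quotient.mk_surjective L m
  rw [quot_ann_eq]
  have hx := h (Submodule.Quotient.mk x)
  rw [quot_ann_eq] at hx
  refine essRI_mono ?_ ?_ hx
  · show op (0:R) • x ∈ K
    simp
  · intro s hs
    exact hKL hs

lemma singular_of_essential {N : Submodule Rᵐᵒᵖ R} (h : IsEssentialRI R N) :
    IsSingularMod R (R ⧸ N) := by
  intro m
  obtain ⟨r, rfl⟩ := Submodule.Quotient.mk_surjective N m
  rw [quot_ann_eq]
  intro K hK hK0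
  rw [set_ne_singleton_zero hK.2.1] at hK0
  by_cases hall : ∀ k ∈ K, r * k = 0
  · rw [set_ne_singleton_zero]
    · obtain ⟨k, hkK, hk0⟩ := hK0
      refine ⟨k, ⟨?_, hkK⟩, hk0⟩
      show op k • r ∈ N
      rw [op_smul_eq_mul, hall k hkK]
      exact N.zero_mem
    · constructor
      · show op (0:R) • r ∈ N
        simp
      · exact hK.2.1
  · push_neg at hall
    obtain ⟨k₁, hk₁K, hk₁⟩ := hall
    let K' : Submodule Rᵐᵒᵖ R :=
      { carrier := {y | ∃ k ∈ K, r * k = y}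
        add_mem' := by
          rintro a b ⟨ka, hka, rfl⟩ ⟨kb, hkb, rfl⟩
          exact ⟨ka + kb, hK.2.2.1 ka hka kb hkb, mul_add r ka kb⟩
        zero_mem' := ⟨0, hK.2.1, mul_zero r⟩
        smul_mem' := by
          rintro t a ⟨k, hk, rfl⟩
          refine ⟨k * t.unop, hK.2.2.2.2 k hk t.unop (Set.mem_univ _), ?_⟩
          show r * (k * t.unop) = t • (r * k)
          rw [MulOpposite.smul_eq_mul_unop, mul_assoc] }
    have hK'ne : K' ≠ ⊥ := by
      rw [Submodule.ne_bot_iff]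
      exact ⟨r * k₁, ⟨k₁, hk₁K, rfl⟩, hk₁⟩
    have := h K' hK'ne
    rw [Submodule.ne_bot_iff] at this
    obtain ⟨y, hy, hy0⟩ := this
    rw [Submodule.mem_inf] at hy
    obtain ⟨hyN, k, hkK, rfl⟩ := hy
    rw [set_ne_singleton_zero]
    · refine ⟨k, ⟨?_, hkK⟩, ?_⟩
      · show op k • r ∈ N
        rwa [op_smul_eq_mul]
      · rintro rfl
        rw [mul_zero] at hy0
        exact hy0 rfl
    · constructor
      · show op (0:R) • r ∈ N
        simp
      · exact hK.2.1

lemma essential_of_singular {N : Submodule Rᵐᵒᵖ R} (h : IsSingularMod R (R ⧸ N)) :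
    IsEssentialRI R N := by
  apply essentialRI_of_essRI
  have h1 := h (Submodule.Quotient.mk 1)
  rw [quot_ann_eq] at h1
  have hset : {s : R | op s • (1:R) ∈ N} = (N : Set R) := by
    ext s
    rw [Set.mem_setOf_eq, op_smul_eq_mul, one_mul, SetLike.mem_coe]
  rwa [hset] at h1

end Aux


/-- If `I` is a maximal two-sided ideal of `R` that is not essential as a right ideal,
then `δ(I) = I ∩ δ(R)`, where `δ(I)` is the Zhou radical of `I` as a right `R`-module. -/

theorem deltaMod_of_maximal_not_essential (R : Type*) [Ring R] (I : Submodule Rᵐᵒᵖ R)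
    (hleft : ∀ r : R, ∀ x ∈ I, r * x ∈ I) (hne : I ≠ ⊤)
    (hmax : ∀ J : Submodule Rᵐᵒᵖ R, (∀ r : R, ∀ x ∈ J, r * x ∈ J) → I < J → J = ⊤)
    (hness : ¬ IsEssentialRI R I) :
    ((Submodule.map I.subtype (deltaMod R I) : Submodule Rᵐᵒᵖ R) : Set R) =
      (I : Set R) ∩ zhouRadical R := by
  classical
  obtain ⟨K₀, hK₀ne, hK₀⟩ : ∃ K : Submodule Rᵐᵒᵖ R, K ≠ ⊥ ∧ I ⊓ K = ⊥ := by
    by_contra hc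
    push_neg at hc
    exact hness fun K hK => hc K hK
  let A : Submodule Rᵐᵒᵖ R :=
    { carrier := {r | ∀ x ∈ I, r * x = 0}
      add_mem' := by
        intro a b ha hb x hx
        rw [add_mul, ha x hx, hb x hx, add_zero]
      zero_mem' := fun x _ => zero_mul x
      smul_mem' := by
        intro t a ha x hx
        rw [MulOpposite.smul_eq_mul_unop, mul_assoc]
        exact ha _ (hleft _ _ hx) }
  have hK₀A : K₀ ≤ A := by
    intro k hk x hx
    have h1 : k * x ∈ I := hleft k x hx
    have h2 : k * x ∈ K₀ := by
      have := K₀.smul_mem (op x) hk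
      rwa [op_smul_eq_mul] at this
    have h3 : k * x ∈ I ⊓ K₀ := Submodule.mem_inf.2 ⟨h1, h2⟩
    rw [hK₀] at h3
    exact (Submodule.mem_bot _).1 h3
  have hIA : I ⊔ A = ⊤ := by
    apply hmax
    · intro r z hz
      rw [Submodule.mem_sup] at hz ⊢
      obtain ⟨a, ha, b, hb, rfl⟩ := hz
      refine ⟨r * a, hleft r a ha, r * b, ?_, (mul_add r a b).symm⟩
      intro x hx
      rw [mul_assoc, hb x hx, mul_zero]
    · obtain ⟨k, hkK₀, hk0⟩ := (Submodule.ne_bot_iff K₀).1 hK₀ne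
      refine lt_of_le_of_ne le_sup_left fun hEq => ?_
      have hkI : k ∈ I := hEq ▸ Submodule.mem_sup_right (hK₀A hkK₀)
      have : k ∈ I ⊓ K₀ := Submodule.mem_inf.2 ⟨hkI, hkK₀⟩
      rw [hK₀] at this
      exact hk0 ((Submodule.mem_bot _).1 this)
  have h1top : (1:R) ∈ I ⊔ A := hIA ▸ Submodule.mem_top
  rw [Submodule.mem_sup] at h1top
  obtain ⟨i, hiI, e, heA, hie⟩ := h1top
  have hei : ∀ x ∈ I, e * x = 0 := heA
  have h1e : (1:R) - e ∈ I := by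
    have : (1:R) - e = i := by rw [← hie, add_sub_cancel_right]
    rw [this]; exact hiI
  have he2 : e * e = e := by
    have h : e * 1 = e * i + e * e := by rw [← hie, mul_add]
    rw [mul_one, hei i hiI, zero_add] at h
    exact h.symm
  let C : Submodule Rᵐᵒᵖ R :=
    { carrier := {y | e * y = y}
      add_mem' := by
        intro a b ha hb
        show e * (a + b) = a + b
        rw [mul_add]
        rw [show e * a = a from ha, show e * b = b from hb]
      zero_mem' := mul_zero e
      smul_mem' := by
        intro t a ha
        show e * (t • a) = t • a
        rw [MulOpposite.smul_eq_mul_unop, ← mul_assoc, show e * a = a from ha] }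
  have hdecompI : ∀ r : R, (1 - e) * r ∈ I := fun r => by
    have := I.smul_mem (op r) h1e
    rwa [op_smul_eq_mul] at this
  have hdecompC : ∀ r : R, e * r ∈ C := fun r => by
    show e * (e * r) = e * r
    rw [← mul_assoc, he2]
  have hdecomp : ∀ r : R, (1 - e) * r + e * r = r := fun r => by
    rw [← add_mul, sub_add_cancel, one_mul]
  have hCI : ∀ y ∈ C, y ∈ I → y = 0 := by
    intro y hy hyI
    have h : e * y = y := hy
    rw [← h]
    exact hei y hyI
  ext x
  simp only [SetLike.mem_coe, Set.mem_inter_iff, Submodule.mem_map]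
  constructor
  · rintro ⟨y, hy, rfl⟩
    refine ⟨y.2, ?_⟩
    intro J hJco hJess
    by_cases hIJ : I ≤ J
    · exact hIJ y.2
    · set N : Submodule Rᵐᵒᵖ ↥I := Submodule.comap I.subtype J with hN
      have hNne : N ≠ ⊤ := by
        intro hc
        apply hIJ
        intro z hz
        exact (hc ▸ Submodule.mem_top : (⟨z, hz⟩ : ↥I) ∈ N)
      have hNco : IsCoatom N := by
        refine ⟨hNne, fun N' hN' => ?_⟩
        obtain ⟨w, hwN', hwN⟩ := SetLike.exists_of_lt hN'
        have hwJ : (w:R) ∉ J := fun h => hwN h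
        have hJw : J ⊔ Submodule.span Rᵐᵒᵖ {(w:R)} = ⊤ := by
          apply hJco.2
          refine lt_of_le_of_ne le_sup_left fun hEq => ?_
          exact hwJ (hEq ▸ Submodule.mem_sup_right (Submodule.mem_span_singleton_self _))
        rw [eq_top_iff]
        intro v _
        have hv : (v:R) ∈ J ⊔ Submodule.span Rᵐᵒᵖ {(w:R)} := hJw.symm ▸ Submodule.mem_top
        rw [Submodule.mem_sup] at hv
        obtain ⟨a, haJ, b, hb, hab⟩ := hv
        rw [Submodule.mem_span_singleton] at hb
        obtain ⟨t, rfl⟩ := hb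
        have haI : a ∈ I := by
          have h : a = (v:R) - t • (w:R) := eq_sub_of_add_eq hab
          rw [h]
          exact I.sub_mem v.2 (I.smul_mem t w.2)
        have hveq : v = ⟨a, haI⟩ + t • w := by
          apply Subtype.ext
          show (v:R) = a + t • (w:R)
          exact hab.symm
        rw [hveq]
        exact N'.add_mem (hN'.le (show (⟨a, haI⟩ : ↥I) ∈ N from haJ)) (N'.smul_mem t hwN')
      have hNsing : IsSingularMod R (↥I ⧸ N) := by
        intro m
        obtain ⟨v, rfl⟩ := Submodule.Quotient.mk_surjective N m
        rw [quot_ann_eq]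
        have h0 := singular_of_essential hJess (Submodule.Quotient.mk (v:R))
        rw [quot_ann_eq] at h0
        have hseteq : {s : R | op s • (v:R) ∈ J} = {s : R | op s • v ∈ N} := by
          ext s
          exact Iff.rfl
        rwa [hseteq] at h0
      have hyN : y ∈ N := by
        refine (sSup_le fun P hP => ?_ : deltaMod R ↥I ≤ N) hy
        by_contra hPN
        have hlt : N < P ⊔ N :=
          lt_of_le_of_ne le_sup_right fun hEq => hPN (hEq ▸ le_sup_left)
        exact hNne (hP N (hNco.2 _ hlt) hNsing)
      exact hyN
  · rintro ⟨hxI, hxz⟩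
    refine ⟨⟨x, hxI⟩, ?_, rfl⟩
    set x' : ↥I := ⟨x, hxI⟩ with hx'
    have hsmall : IsDeltaSmall R (Submodule.span Rᵐᵒᵖ {x'}) := by
      intro K hsupK hsing
      by_contra hKne
      have hxK : x' ∉ K := by
        intro h
        apply hKne
        have hle : Submodule.span Rᵐᵒᵖ {x'} ≤ K := by
          rw [Submodule.span_le, Set.singleton_subset_iff]
          exact h
        rwa [sup_eq_right.2 hle] at hsupK
      have hchain : ∀ c ⊆ {L : Submodule Rᵐᵒᵖ ↥I | K ≤ L ∧ x' ∉ L},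
          IsChain (· ≤ ·) c → ∀ y ∈ c, ∃ ub ∈ {L : Submodule Rᵐᵒᵖ ↥I | K ≤ L ∧ x' ∉ L},
            ∀ z ∈ c, z ≤ ub := by
        intro c hcS hch y hyc
        refine ⟨sSup c, ⟨(hcS hyc).1.trans (le_sSup hyc), ?_⟩, fun z hz => le_sSup hz⟩
        intro hmem
        rw [Submodule.mem_sSup_of_directed ⟨y, hyc⟩ hch.directedOn] at hmem
        obtain ⟨L', hL'c, hxL'⟩ := hmem
        exact (hcS hL'c).2 hxL'
      obtain ⟨L, hKL, ⟨hKL', hxL⟩, hLmaxp⟩ :=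
        zorn_le_nonempty₀ {L : Submodule Rᵐᵒᵖ ↥I | K ≤ L ∧ x' ∉ L} hchain K ⟨le_refl K, hxK⟩
      have hLco : IsCoatom L := by
        constructor
        · intro h
          rw [h] at hxL
          exact hxL Submodule.mem_top
        · intro L'' hlt
          have hxL'' : x' ∈ L'' := by
            by_contra hx''
            exact absurd (hLmaxp ⟨hKL'.trans hlt.le, hx''⟩ hlt.le) (not_le_of_gt hlt)
          have hle : Submodule.span Rᵐᵒᵖ {x'} ⊔ K ≤ L'' := by
            refine sup_le ?_ (hKL'.trans hlt.le)
            rw [Submodule.span_le, Set.singleton_subset_iff]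
            exact hxL''
          rw [hsupK] at hle
          exact eq_top_iff.2 hle
      have hsingL : IsSingularMod R (↥I ⧸ L) := singular_quotient_mono hKL' hsing
      set Lb : Submodule Rᵐᵒᵖ R := Submodule.map I.subtype L with hLb
      have hLbI : ∀ r ∈ Lb, r ∈ I := by
        rintro r ⟨u, hu, rfl⟩
        exact u.2
      set J : Submodule Rᵐᵒᵖ R := Lb ⊔ C with hJ
      have g1 : ∀ r ∈ J, r ∈ I → r ∈ Lb := by
        intro r hr hrI
        rw [hJ, Submodule.mem_sup] at hr
        obtain ⟨a, haL, b, hbC, rfl⟩ := hr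
        have hbI : b ∈ I := by
          have h : b = (a + b) - a := (add_sub_cancel_left a b).symm
          rw [h]
          exact I.sub_mem hrI (hLbI a haL)
        rw [hCI b hbC hbI, add_zero]
        exact haL
      have g2 : x ∉ J := by
        intro h
        obtain ⟨u, hu, hux⟩ := g1 x h hxI
        apply hxL
        have h2 : u = x' := Subtype.ext hux
        exact h2 ▸ hu
      have g3 : IsCoatom J := by
        constructor
        · intro h
          rw [h] at g2
          exact g2 Submodule.mem_top
        · intro J' hlt
          obtain ⟨z, hzJ', hzJ⟩ := SetLike.exists_of_lt hlt
          have hwI : (1 - e) * z ∈ I := hdecompI z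
          have hezJ : e * z ∈ J := Submodule.mem_sup_right (hdecompC z)
          have hwJ' : (1 - e) * z ∈ J' := by
            have h : (1 - e) * z = z - e * z := by rw [sub_mul, one_mul]
            rw [h]
            exact J'.sub_mem hzJ' (hlt.le hezJ)
          have hwJ : (1 - e) * z ∉ J := by
            intro h
            apply hzJ
            rw [← hdecomp z]
            exact J.add_mem h hezJ
          have hwL : (⟨(1 - e) * z, hwI⟩ : ↥I) ∉ L := by
            intro h
            exact hwJ (Submodule.mem_sup_left ⟨_, h, rfl⟩)
          set L' : Submodule Rᵐᵒᵖ ↥I := Submodule.comap I.subtype J' with hL'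
          have hLL' : L < L' := by
            refine lt_of_le_of_ne ?_ fun hEq => ?_
            · intro u hu
              exact hlt.le (Submodule.mem_sup_left ⟨u, hu, rfl⟩)
            · exact hwL (hEq ▸ (hwJ' : I.subtype ⟨(1 - e) * z, hwI⟩ ∈ J'))
          have hL'top : L' = ⊤ := hLco.2 _ hLL'
          rw [eq_top_iff]
          intro r _
          have hIJ' : ∀ v ∈ I, v ∈ J' := by
            intro v hv
            exact (hL'top ▸ Submodule.mem_top : (⟨v, hv⟩ : ↥I) ∈ L')
          rw [← hdecomp r]
          exact J'.add_mem (hIJ' _ (hdecompI r)) (hlt.le (Submodule.mem_sup_right (hdecompC r)))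
      have g4 : IsSingularMod R (R ⧸ J) := by
        intro m
        obtain ⟨r, rfl⟩ := Submodule.Quotient.mk_surjective J m
        rw [quot_ann_eq]
        set w' : ↥I := ⟨(1 - e) * r, hdecompI r⟩ with hw'
        have h0 := hsingL (Submodule.Quotient.mk w')
        rw [quot_ann_eq] at h0
        refine essRI_mono ?_ ?_ h0
        · show op (0:R) • w' ∈ L
          simp
        · intro s hs
          show op s • r ∈ J
          rw [op_smul_eq_mul]
          have h1 : ((1 - e) * r) * s ∈ J :=
            Submodule.mem_sup_left ⟨op s • w', hs, rfl⟩
          have h2 : (e * r) * s ∈ J := by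
            rw [mul_assoc]
            exact Submodule.mem_sup_right (hdecompC _)
          have h3 : r * s = ((1 - e) * r) * s + (e * r) * s := by
            rw [← add_mul, hdecomp]
          rw [h3]
          exact J.add_mem h1 h2
      have g5 := essential_of_singular g4
      exact g2 (hxz J g3 g5)
    exact (show Submodule.span Rᵐᵒᵖ {x'} ≤ deltaMod R ↥I from
      le_sSup (s := {N : Submodule Rᵐᵒᵖ ↥I | IsDeltaSmall R N}) hsmall)
      (Submodule.mem_span_singleton_self x')
end

section
/- In the ring R = Z_16, the ideal I = 4Z_16 is essential but not maximal, δ(R) = 2Z_16, δ(I) = 8Z_16 (Zhou radical of I as a ring without identity), and I ∩ δ(R) = I is not contained in δ(I). -/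
open MulOpposite

-- auxiliary
abbrev Zm := ZMod 16
def sI : Set Zm := {x : Zm | ∃ y, x = 4 * y}
def sJ : Set Zm := {x : Zm | ∃ y, x = 8 * y}
def s2 : Set Zm := {x : Zm | ∃ y, x = 2 * y}

lemma mem_sI {x : Zm} : x ∈ sI ↔ ∃ y, x = 4 * y := Iff.rfl
lemma mem_sJ {x : Zm} : x ∈ sJ ↔ ∃ y, x = 8 * y := Iff.rfl

/-- The maximal ideal 2R as a submodule over Rᵐᵒᵖ. -/
def M2 : Submodule Zmᵐᵒᵖ Zm where
  carrier := s2
  zero_mem' := ⟨0, by ring⟩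
  add_mem' := by rintro a b ⟨u, rfl⟩ ⟨v, rfl⟩; exact ⟨u + v, by ring⟩
  smul_mem' := by
    rintro c x ⟨u, rfl⟩
    exact ⟨u * c.unop, by show 2 * u * c.unop = 2 * (u * c.unop); ring⟩

lemma mem_M2 {x : Zm} : x ∈ M2 ↔ ∃ y, x = 2 * y := Iff.rfl

lemma top_of_unit_mem {b : Submodule Zmᵐᵒᵖ Zm} {x : Zm} (hx : x ∈ b) (hxo : x ∉ M2) :
    b = ⊤ := by
  obtain ⟨u, hu⟩ := (by decide : ∀ x : Zm, (¬ ∃ y, x = 2 * y) → ∃ u, x * u = 1) x hxo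
  have h1 : (1 : Zm) ∈ b := by
    have := b.smul_mem (op u) hx
    rwa [show (op u) • x = x * u from rfl, hu] at this
  rw [eq_top_iff]
  intro z _
  have := b.smul_mem (op z) h1
  rwa [show (op z) • (1 : Zm) = 1 * z from rfl, one_mul] at this

lemma M2_coatom : IsCoatom M2 := by
  constructor
  · intro h
    have : (1 : Zm) ∈ M2 := h ▸ Submodule.mem_top
    exact (by decide : ¬ ∃ y : Zm, 1 = 2 * y) this
  · intro b hb
    obtain ⟨x, hxb, hxM⟩ := SetLike.exists_of_lt hb
    exact top_of_unit_mem hxb hxM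

lemma M2_ess : IsEssentialRI Zm M2 := by
  intro K hK h
  obtain ⟨a, haK, ha0⟩ := Submodule.ne_bot_iff K |>.mp hK
  obtain ⟨y, hy⟩ := (by decide : ∀ a : Zm, a ≠ 0 → ∃ y, a * y = 8) a ha0
  have h8K : (8 : Zm) ∈ K := by
    have := K.smul_mem (op y) haK
    rwa [show (op y) • a = a * y from rfl, hy] at this
  have h8 : (8 : Zm) ∈ M2 ⊓ K := ⟨⟨4, by decide⟩, h8K⟩
  rw [h] at h8
  exact (by decide : (8 : Zm) ≠ 0) ((Submodule.mem_bot _).mp h8)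

lemma coatom_eq_M2 {I : Submodule Zmᵐᵒᵖ Zm} (hI : IsCoatom I) : I = M2 := by
  have hle : I ≤ M2 := by
    intro x hx
    by_contra hxM
    exact hI.1 (top_of_unit_mem hx hxM)
  rcases eq_or_lt_of_le hle with h | h
  · exact h
  · exact absurd (hI.2 M2 h) M2_coatom.1

lemma zhou_eq : zhouRadical Zm = s2 := by
  ext x
  constructor
  · intro h; exact h M2 M2_coatom M2_ess
  · intro hx I hco _
    rw [coatom_eq_M2 hco]; exact hx

-- nonzero element extraction from a set ideal
lemma exists_ne_zero {K : Set Zm} (h0 : (0 : Zm) ∈ K) (hK : K ≠ ({0} : Set Zm)) :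
    ∃ a ∈ K, a ≠ 0 := by
  by_contra h
  push_neg at h
  apply hK
  ext z
  exact ⟨fun hz => h z hz, fun hz => hz ▸ h0⟩

lemma ne_singleton_of_mem {S : Set Zm} {a : Zm} (ha : a ∈ S) (h0 : a ≠ 0) :
    S ≠ ({0} : Set Zm) := by
  intro h; rw [h] at ha; exact h0 ha

-- Part 1
lemma part1 : IsEssRI (Set.univ : Set Zm) sI := by
  intro K hK hne
  obtain ⟨a, haK, ha0⟩ := exists_ne_zero hK.2.1 hne
  obtain ⟨y, hy⟩ := (by decide : ∀ a : Zm, a ≠ 0 → ∃ y, a * y = 8) a ha0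
  have h8K : (8 : Zm) ∈ K := hy ▸ hK.2.2.2.2 a haK y trivial
  exact ne_singleton_of_mem ⟨⟨2, by decide⟩, h8K⟩ (by decide)

lemma IsRI_s2 : IsRI (Set.univ : Set Zm) s2 := by
  refine ⟨Set.subset_univ _, ⟨0, by ring⟩, ?_, ?_, ?_⟩
  · rintro a ⟨u, rfl⟩ b ⟨v, rfl⟩; exact ⟨u + v, by ring⟩
  · rintro a ⟨u, rfl⟩; exact ⟨-u, by ring⟩
  · rintro a ⟨u, rfl⟩ y _; exact ⟨u * y, by ring⟩

-- Part 2
lemma part2 : ¬ IsMaxRI (Set.univ : Set Zm) sI := by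
  rintro ⟨_, _, hmax⟩
  have hsub : sI ⊆ s2 := by
    rintro x ⟨y, rfl⟩; exact ⟨2 * y, by ring⟩
  rcases hmax s2 IsRI_s2 hsub with h | h
  · have : (2 : Zm) ∈ sI := h ▸ (⟨1, by decide⟩ : (2 : Zm) ∈ s2)
    exact (by decide : ¬ ∃ y : Zm, 2 = 4 * y) this
  · have : (1 : Zm) ∈ s2 := h ▸ trivial
    exact (by decide : ¬ ∃ y : Zm, 1 = 2 * y) this

-- Part 4 machinery
lemma IsRI_sJ : IsRI sI sJ := by
  refine ⟨?_, ⟨0, by ring⟩, ?_, ?_, ?_⟩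
  · rintro x ⟨y, rfl⟩; exact ⟨2 * y, by ring⟩
  · intro a ha b hb
    exact (by decide : ∀ a b : Zm, (∃ u, a = 8 * u) → (∃ u, b = 8 * u) →
      ∃ u, a + b = 8 * u) a b ha hb
  · intro a ha
    exact (by decide : ∀ a : Zm, (∃ u, a = 8 * u) → ∃ u, -a = 8 * u) a ha
  · intro a ha y hy
    exact (by decide : ∀ a y : Zm, (∃ u, a = 8 * u) → (∃ v, y = 4 * v) →
      ∃ u, a * y = 8 * u) a y ha hy

lemma K_eq_sI {K : Set Zm} (hK : IsRI sI K) (h : (4 : Zm) ∈ K ∨ (12 : Zm) ∈ K) :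
    K = sI := by
  have h4 : (4 : Zm) ∈ K := by
    rcases h with h | h
    · exact h
    · have := hK.2.2.2.1 _ h
      rwa [(by decide : -(12 : Zm) = 4)] at this
  have h8 : (8 : Zm) ∈ K := by
    have := hK.2.2.1 _ h4 _ h4
    rwa [(by decide : (4 : Zm) + 4 = 8)] at this
  have h12 : (12 : Zm) ∈ K := by
    have := hK.2.2.1 _ h8 _ h4
    rwa [(by decide : (8 : Zm) + 4 = 12)] at this
  apply Set.Subset.antisymm hK.1
  intro x hx
  rcases (by decide : ∀ x : Zm, (∃ y, x = 4 * y) → x = 0 ∨ x = 4 ∨ x = 8 ∨ x = 12)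
      x hx with h | h | h | h <;> subst h
  · exact hK.2.1
  · exact h4
  · exact h8
  · exact h12

lemma sJ_ne_sI : sJ ≠ sI := by
  intro h
  have : (4 : Zm) ∈ sJ := h ▸ (⟨1, by decide⟩ : (4 : Zm) ∈ sI)
  exact (by decide : ¬ ∃ y : Zm, 4 = 8 * y) this

lemma max_sJ : IsMaxRI sI sJ := by
  refine ⟨IsRI_sJ, sJ_ne_sI, ?_⟩
  intro K hK hsub
  by_cases h : (4 : Zm) ∈ K ∨ (12 : Zm) ∈ K
  · exact Or.inr (K_eq_sI hK h)
  · push_neg at h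
    left
    apply Set.Subset.antisymm _ hsub
    intro x hx
    exact (by decide : ∀ x : Zm, (∃ y, x = 4 * y) → x ≠ 4 → x ≠ 12 → ∃ y, x = 8 * y)
      x (hK.1 hx) (fun e => h.1 (e ▸ hx)) (fun e => h.2 (e ▸ hx))

lemma ess_sJ : IsEssRI sI sJ := by
  intro K hK hne
  obtain ⟨a, haK, ha0⟩ := exists_ne_zero hK.2.1 hne
  have h8 : (8 : Zm) ∈ K := by
    rcases (by decide : ∀ a : Zm, (∃ y, a = 4 * y) → a ≠ 0 → a = 8 ∨ a + a = 8)
        a (hK.1 haK) ha0 with h | h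
    · exact h ▸ haK
    · exact h ▸ hK.2.2.1 a haK a haK
  exact ne_singleton_of_mem ⟨⟨1, by decide⟩, h8⟩ (by decide)

lemma max_contains8 {J : Set Zm} (hJ : IsMaxRI sI J) : (8 : Zm) ∈ J := by
  have h4 : (4 : Zm) ∉ J := fun h => hJ.2.1 (K_eq_sI hJ.1 (Or.inl h))
  have h12 : (12 : Zm) ∉ J := fun h => hJ.2.1 (K_eq_sI hJ.1 (Or.inr h))
  have hsub : J ⊆ sJ := by
    intro x hx
    exact (by decide : ∀ x : Zm, (∃ y, x = 4 * y) → x ≠ 4 → x ≠ 12 → ∃ y, x = 8 * y)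
      x (hJ.1.1 hx) (fun e => h4 (e ▸ hx)) (fun e => h12 (e ▸ hx))
  rcases hJ.2.2 sJ IsRI_sJ hsub with h | h
  · exact h ▸ (⟨1, by decide⟩ : (8 : Zm) ∈ sJ)
  · exact absurd h sJ_ne_sI

lemma part4 : zhouSet sI = sJ := by
  ext x
  constructor
  · rintro ⟨_, h⟩
    exact h sJ max_sJ ess_sJ
  · intro hx
    refine ⟨IsRI_sJ.1 hx, fun J hJ _ => ?_⟩
    rcases (by decide : ∀ x : Zm, (∃ y, x = 8 * y) → x = 0 ∨ x = 8) x hx with h | h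
    · exact h ▸ hJ.1.2.1
    · exact h ▸ max_contains8 hJ

/-- In `R = ℤ/16ℤ` with `I = 4R`: `I` is essential but not maximal, `δ(R) = 2R`,
`δ(I) = 8R` (Zhou radical of `I` as a ring without identity), and
`I ∩ δ(R) = I` is not contained in `δ(I)`. -/
theorem zmod16_zhou_example :
    IsEssRI (Set.univ : Set (ZMod 16)) {x : ZMod 16 | ∃ y, x = 4 * y} ∧
    ¬ IsMaxRI (Set.univ : Set (ZMod 16)) {x : ZMod 16 | ∃ y, x = 4 * y} ∧
    zhouRadical (ZMod 16) = {x : ZMod 16 | ∃ y, x = 2 * y} ∧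
    zhouSet {x : ZMod 16 | ∃ y, x = 4 * y} = {x : ZMod 16 | ∃ y, x = 8 * y} ∧
    {x : ZMod 16 | ∃ y, x = 4 * y} ∩ zhouRadical (ZMod 16) =
      {x : ZMod 16 | ∃ y, x = 4 * y} ∧
    ¬ ({x : ZMod 16 | ∃ y, x = 4 * y} ∩ zhouRadical (ZMod 16) ⊆
        zhouSet {x : ZMod 16 | ∃ y, x = 4 * y}) := by
  have p3 : zhouRadical (ZMod 16) = s2 := zhou_eq
  refine ⟨part1, part2, p3, part4, ?_, ?_⟩
  · rw [p3]
    apply Set.Subset.antisymm (Set.inter_subset_left)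
    intro x hx
    refine ⟨hx, ?_⟩
    exact (by decide : ∀ x : Zm, (∃ y, x = 4 * y) → ∃ y, x = 2 * y) x hx
  · intro h
    have h4 : (4 : Zm) ∈ {x : ZMod 16 | ∃ y, x = 4 * y} ∩ zhouRadical (ZMod 16) := by
      refine ⟨⟨1, by decide⟩, ?_⟩
      rw [p3]; exact ⟨2, by decide⟩
    have := h h4
    rw [show zhouSet {x : ZMod 16 | ∃ y, x = 4 * y} = sJ from part4] at this
    exact (by decide : ¬ ∃ y : Zm, 4 = 8 * y) this
end

section
/- For R = Z and S = Z \ {0}, one has δ(Z) = 0 while δ(S⁻¹Z) = δ(Q) = Q; in particular the inclusion δ(S⁻¹R) ⊆ S⁻¹δ(R) fails. -/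
open MulOpposite

lemma mem_opSpan (p x : ℤ) : x ∈ Submodule.span ℤᵐᵒᵖ {p} ↔ p ∣ x := by
  rw [Submodule.mem_span_singleton]
  constructor
  · rintro ⟨a, rfl⟩
    exact ⟨a.unop, rfl⟩
  · rintro ⟨c, rfl⟩
    exact ⟨op c, rfl⟩

lemma opSpan_coatom {p : ℤ} (hp : Prime p) : IsCoatom (Submodule.span ℤᵐᵒᵖ {p}) := by
  constructor
  · intro h
    have : (1 : ℤ) ∈ Submodule.span ℤᵐᵒᵖ {p} := h ▸ Submodule.mem_top
    rw [mem_opSpan] at this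
    exact hp.not_unit (isUnit_of_dvd_one this)
  · intro J hJ
    rw [lt_iff_le_and_ne] at hJ
    obtain ⟨hle, hne⟩ := hJ
    -- there is x ∈ J with p ∤ x
    have : ∃ x ∈ J, ¬ p ∣ x := by
      by_contra h
      push_neg at h
      apply hne
      apply le_antisymm hle
      intro x hx
      rw [mem_opSpan]
      exact h x hx
    obtain ⟨x, hxJ, hpx⟩ := this
    have hgcd : IsCoprime p x := by
      rw [Int.isCoprime_iff_gcd_eq_one]
      exact (Int.prime_iff_natAbs_prime.mp hp).coprime_iff_not_dvd.mpr
        (fun hd => hpx (Int.natAbs_dvd_natAbs.mp hd))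
    obtain ⟨a, b, hab⟩ := hgcd
    rw [eq_top_iff]
    intro y _
    have h1 : (1 : ℤ) ∈ J := by
      have hp' : p ∈ J := hle (by rw [mem_opSpan])
      have := J.add_mem (J.smul_mem (op a) hp') (J.smul_mem (op b) hxJ)
      have e : (op a : ℤᵐᵒᵖ) • p + (op b : ℤᵐᵒᵖ) • x = 1 := by
        show p * a + x * b = 1
        rw [mul_comm p a, mul_comm x b]; exact hab
      rwa [e] at this
    have := J.smul_mem (op y) h1
    simpa using this

lemma opSpan_essential {p : ℤ} (hp : p ≠ 0) : IsEssentialRI ℤ (Submodule.span ℤᵐᵒᵖ {p}) := by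
  intro K hK h
  apply hK
  rw [Submodule.eq_bot_iff] at h ⊢
  intro y hy
  have hyp : (op p : ℤᵐᵒᵖ) • y ∈ Submodule.span ℤᵐᵒᵖ {p} ⊓ K := by
    rw [Submodule.mem_inf]
    constructor
    · rw [mem_opSpan]; exact ⟨y, mul_comm y p⟩
    · exact K.smul_mem _ hy
  have := h _ hyp
  have : y * p = 0 := this
  rcases mul_eq_zero.mp this with h0 | h0
  · exact h0
  · exact absurd h0 hp

lemma zhou_int : zhouRadical ℤ = {0} := by
  ext x
  simp only [Set.mem_singleton_iff]
  constructor
  · intro hx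
    by_contra h0
    obtain ⟨p, hpgt, hp⟩ := Nat.exists_infinite_primes (x.natAbs + 1)
    have hpp : Prime (p : ℤ) := Nat.prime_iff_prime_int.mp hp
    have := hx _ (opSpan_coatom hpp) (opSpan_essential hpp.ne_zero)
    rw [mem_opSpan] at this
    have : (p : ℤ) ∣ x.natAbs := Int.ofNat_dvd_right.mpr (Int.natAbs_dvd_natAbs.mpr this)
    have hdvd : p ∣ x.natAbs := Int.ofNat_dvd.mp this
    have : p ≤ x.natAbs := Nat.le_of_dvd (Int.natAbs_pos.mpr h0) hdvd
    omega
  · rintro rfl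
    intro I _ _
    exact I.zero_mem

lemma zhou_rat : zhouRadical ℚ = Set.univ := by
  ext x
  simp only [Set.mem_univ, iff_true]
  intro I hI hess
  exfalso
  -- any nonzero submodule of ℚ over ℚᵐᵒᵖ is ⊤
  have key : ∀ J : Submodule ℚᵐᵒᵖ ℚ, J ≠ ⊥ → J = ⊤ := by
    intro J hJ
    obtain ⟨q, hqJ, hq⟩ := Submodule.exists_mem_ne_zero_of_ne_bot hJ
    rw [eq_top_iff]
    intro y _
    have := J.smul_mem (op (q⁻¹ * y)) hqJ
    have e : (op (q⁻¹ * y) : ℚᵐᵒᵖ) • q = y := by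
      show q * (q⁻¹ * y) = y
      rw [← mul_assoc, mul_inv_cancel₀ hq, one_mul]
    rwa [e] at this
  -- so the coatom I must be ⊥
  have hIbot : I = ⊥ := by
    by_contra h
    exact hI.1 (key I h)
  have htop : (⊤ : Submodule ℚᵐᵒᵖ ℚ) ≠ ⊥ := by
    intro h
    have : (1 : ℚ) = 0 := (Submodule.eq_bot_iff _).mp h 1 Submodule.mem_top
    simp at this
  have := hess ⊤ htop
  rw [hIbot] at this
  simp at this

/-- For `R = ℤ` and `S = ℤ \ {0}`, one has `δ(ℤ) = 0` and `δ(S⁻¹ℤ) = δ(ℚ) = ℚ`;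
in particular the inclusion `δ(S⁻¹R) ⊆ S⁻¹δ(R)` fails. -/
theorem zhouRadical_int_rat :
    zhouRadical ℤ = {0} ∧ zhouRadical ℚ = Set.univ ∧
    ¬ (zhouRadical ℚ ⊆ {x : ℚ | ∃ s : ℤ, s ≠ 0 ∧ ∃ r ∈ zhouRadical ℤ, (s : ℚ) * x = (r : ℚ)}) := by
  refine ⟨zhou_int, zhou_rat, ?_⟩
  intro h
  have h1 : (1 : ℚ) ∈ zhouRadical ℚ := by rw [zhou_rat]; trivial
  obtain ⟨s, hs, r, hr, heq⟩ := h h1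
  rw [zhou_int] at hr
  rw [Set.mem_singleton_iff] at hr
  subst hr
  rw [mul_one] at heq
  exact hs (by exact_mod_cast heq)
end

section
/- Every central semicommutative ring is Zhou e-reduced for every idempotent e: if a ∈ R is nilpotent, then ae ∈ δ(R) and ea ∈ δ(R). More precisely, in a central semicommutative ring every nilpotent element a satisfies that Ra is a nilpotent left ideal, hence Ra ⊆ J(R) ⊆ δ(R). -/
open MulOpposite

/-- Every central semicommutative ring is Zhou `e`-reduced for every idempotent `e`:
for every nilpotent `a`, the left ideal `Ra` is nilpotent, `Ra ⊆ δ(R)`, and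
`a * e ∈ δ(R)` and `e * a ∈ δ(R)` for every idempotent `e`. -/
theorem central_semicommutative_zhou_reduced (R : Type*) [Ring R]
    (hcs : ∀ a b : R, a * b = 0 → ∀ r : R, a * r * b ∈ Set.center R) :
    ∀ a : R, IsNilpotent a →
      (∃ n : ℕ, 0 < n ∧ ∀ l : List R, l.length = n → (l.map (fun r => r * a)).prod = 0) ∧
      (∀ r : R, r * a ∈ zhouRadical R) ∧
      ∀ e : R, IsIdempotentElem e → a * e ∈ zhouRadical R ∧ e * a ∈ zhouRadical R := by
  intro a ha
  obtain ⟨n₀, hn₀⟩ := ha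
  set n : ℕ := n₀ + 1 with hn_def
  have hn : a ^ n = 0 := by rw [hn_def, pow_succ, hn₀, zero_mul]
  set P : ℕ → ℕ → Prop :=
    fun p m => ∀ l : List R, l.length = m →
      a ^ p * (l.map (fun r => r * a)).prod = 0 with hP
  -- monotonicity in m
  have mono : ∀ p m, P p m → P p (m + 1) := by
    intro p m h l hl
    rcases List.eq_nil_or_concat l with rfl | ⟨L, b, rfl⟩
    · simp at hl
    · have hL : L.length = m := by simpa using hl
      rw [List.concat_eq_append, List.map_append, List.prod_append, List.map_singleton,
        List.prod_singleton, ← mul_assoc, h L hL, zero_mul]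
  -- the induction step
  have step : ∀ p m, P (p + 1) m → P p (m + 2) := by
    intro p m h l hl
    rcases l with _ | ⟨x, t⟩
    · simp at hl
    have ht : t.length = m + 1 := by simpa using hl
    rcases List.eq_nil_or_concat t with rfl | ⟨L, y, rfl⟩
    · simp at ht
    have hL : L.length = m := by simpa using ht
    set X : R := (L.map (fun r => r * a)).prod with hX
    have h1 : a ^ (p + 1) * X = 0 := h L hL
    have h2 : a ^ (p + 1) * ((x * a) * X) = 0 := by
      have := mono (p + 1) m h (x :: L) (by simp [hL])
      simpa only [List.map_cons, List.prod_cons] using this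
    have hcent : a ^ p * x * (a * X) ∈ Set.center R := by
      refine hcs (a ^ p) (a * X) ?_ x
      rw [← mul_assoc, ← pow_succ, h1]
    have hc := Set.mem_center_iff.mp hcent
    simp only [List.concat_eq_append, List.map_cons, List.map_append, List.map_singleton,
      List.map_nil, List.prod_cons, List.prod_append, List.prod_singleton, List.prod_nil, mul_one]
    rw [← hX]
    have hrw : a ^ p * ((x * a) * (X * (y * a)))
        = (a ^ p * x * (a * X)) * (y * a) := by
      simp only [mul_assoc]
    rw [hrw, hc.comm (y * a)]
    have hrw2 : (y * a) * (a ^ p * x * (a * X)) = y * (a ^ (p + 1) * ((x * a) * X)) := by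
      rw [pow_succ']
      simp only [mul_assoc]
    rw [hrw2, h2, mul_zero]
  -- chain of inductions
  have chain : ∀ k, k ≤ n → P (n - k) (2 * k) := by
    intro k
    induction k with
    | zero =>
      intro _ l hl
      rw [List.length_eq_zero_iff.mp hl]
      simp [hn]
    | succ k ih =>
      intro hk
      have h1 : P (n - k) (2 * k) := ih (Nat.le_of_succ_le hk)
      have h2 : n - k = (n - (k + 1)) + 1 := by omega
      rw [h2] at h1
      have h3 := step _ _ h1
      have h4 : 2 * (k + 1) = 2 * k + 2 := by ring
      rw [h4]
      exact h3
  have hP0 : P 0 (2 * n) := by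
    have := chain n le_rfl
    simpa using this
  set N : ℕ := 2 * n with hN_def
  have hN : ∀ l : List R, l.length = N → (l.map (fun r => r * a)).prod = 0 := by
    intro l hl
    have := hP0 l hl
    simpa using this
  -- part 2
  have part2 : ∀ r : R, r * a ∈ zhouRadical R := by
    intro r I hI _hess
    by_contra hmem
    have hlt : I < I ⊔ Submodule.span Rᵐᵒᵖ {r * a} :=
      left_lt_sup.mpr (fun hle => hmem (hle (Submodule.mem_span_singleton_self _)))
    have htop := hI.2 _ hlt
    have h1 : (1 : R) ∈ I ⊔ Submodule.span Rᵐᵒᵖ {r * a} := htop ▸ Submodule.mem_top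
    obtain ⟨y, hy, z, hz, hyz⟩ := Submodule.mem_sup.mp h1
    obtain ⟨c, rfl⟩ := Submodule.mem_span_singleton.mp hz
    set s : R := c.unop with hs
    have hsmul : c • (r * a) = (r * a) * s := rfl
    have hform : ∀ k : ℕ, ((r * a) * s) ^ (k + 1) = r * a * ((((s * r) * a) ^ k) * s) := by
      intro k
      induction k with
      | zero => simp [mul_assoc]
      | succ k ih =>
        rw [pow_succ, ih, pow_succ]
        simp only [mul_assoc]
    have hb : ((s * r) * a) ^ N = 0 := by
      have := hN (List.replicate N (s * r)) (by simp)
      simpa [List.map_replicate, List.prod_replicate] using this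
    have hnil : IsNilpotent ((r * a) * s) := ⟨N + 1, by rw [hform N, hb, zero_mul, mul_zero]⟩
    have hyval : y = 1 - (r * a) * s := by
      rw [hsmul] at hyz
      exact eq_sub_of_add_eq hyz
    have hunit : IsUnit y := hyval ▸ IsNilpotent.isUnit_one_sub hnil
    obtain ⟨u, hu⟩ := hunit
    have h1I : (1 : R) ∈ I := by
      have hmem1 := I.smul_mem (op ((↑u⁻¹ : Rˣ) : R)) hy
      have heq : (op ((↑u⁻¹ : Rˣ) : R)) • y = 1 := by
        show y * ((↑u⁻¹ : Rˣ) : R) = 1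
        rw [← hu]
        exact u.mul_inv
      rwa [heq] at hmem1
    refine absurd ?_ hI.1
    rw [eq_top_iff]
    intro x _
    have hx := I.smul_mem (op x) h1I
    simpa using hx
  refine ⟨⟨N, by positivity, hN⟩, part2, ?_⟩
  intro e _he
  constructor
  · intro I hI hess
    have haI : a ∈ I := by simpa using part2 1 I hI hess
    have := I.smul_mem (op e) haI
    simpa using this
  · exact part2 e
end

section
/- Every right e-semicommutative ring R is Zhou right e-reduced: for any nilpotent a ∈ R, ae ∈ δ(R). In fact, if a ∈ R is nilpotent of index n in a right e-semicommutative ring, then (Rae)ⁿ = 0, so Rae is a nilpotent left ideal contained in δ(R). -/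
open MulOpposite

/-- Every right `e`-semicommutative ring is Zhou right `e`-reduced: if `a` is nilpotent
with `aⁿ = 0`, `n > 0`, then `(Rae)ⁿ = 0`, so `Rae` is a nilpotent left ideal, and
`a * e ∈ δ(R)`. -/
theorem right_e_semicommutative_zhou_right_e_reduced (R : Type*) [Ring R]
    (e : R) (he : IsIdempotentElem e)
    (hsc : ∀ a b : R, a * b = 0 → ∀ r : R, a * r * (b * e) = 0) :
    ∀ (a : R) (n : ℕ), 0 < n → a ^ n = 0 →
      (∀ l : List R, l.length = n → (l.map (fun r => r * (a * e))).prod = 0) ∧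
      a * e ∈ zhouRadical R := by
  intro a n hn ha
  -- products of factors `r * (a*e)` absorb `e` on the right after an `e` prefix
  have hend : ∀ l : List R,
      e * ((l.map (fun r => r * (a * e))).prod * e)
        = e * (l.map (fun r => r * (a * e))).prod := by
    intro l
    induction l with
    | nil => simpa using he.eq
    | cons r l ih =>
      simp only [List.map_cons, List.prod_cons, mul_assoc] at ih ⊢
      rw [ih]
  have L : ∀ l : List R, l.length < n → ∀ r : R,
      a ^ (n - 1 - l.length) * (r * ((a * e) * (l.map (fun r => r * (a * e))).prod)) = 0 := by
    intro l
    induction l with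
    | nil =>
      intro _ r
      have h0 : a ^ (n - 1) * a = 0 := by
        rw [← pow_succ, Nat.sub_add_cancel hn, ha]
      have h1 := hsc (a ^ (n - 1)) a h0 r
      simpa [mul_assoc] using h1
    | cons r' l ih =>
      intro hlen r
      have hl : l.length < n := by simp at hlen; omega
      have h1 := ih hl (e * r')
      have hlen' : l.length + 1 < n := by simpa using hlen
      have hm : n - 1 - l.length = (n - 1 - (r' :: l).length) + 1 := by
        simp only [List.length_cons]; omega
      rw [hm, pow_succ, mul_assoc] at h1
      have h2 := hsc (a ^ (n - 1 - (r' :: l).length))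
        (a * (e * r' * ((a * e) * (l.map (fun r => r * (a * e))).prod))) h1 r
      simp only [mul_assoc] at h2 ⊢
      rw [hend l] at h2
      simpa [List.length_cons, mul_assoc] using h2
  have hlist : ∀ l : List R, l.length = n →
      (l.map (fun r => r * (a * e))).prod = 0 := by
    intro l hl
    match l with
    | [] => simp at hl; omega
    | r :: l' =>
      have hlen : l'.length < n := by simp at hl; omega
      have h := L l' hlen r
      have hz : n - 1 - l'.length = 0 := by simp at hl; omega
      rw [hz, pow_zero, one_mul] at h
      simpa [mul_assoc] using h
  refine ⟨hlist, ?_⟩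
  intro I hI _
  by_contra hx
  have hlt : I < I ⊔ Submodule.span Rᵐᵒᵖ {a * e} := by
    refine left_lt_sup.mpr fun hle => hx ?_
    exact hle (Submodule.mem_span_singleton_self _)
  have htop : I ⊔ Submodule.span Rᵐᵒᵖ {a * e} = ⊤ := hI.2 _ hlt
  have h1 : (1 : R) ∈ I ⊔ Submodule.span Rᵐᵒᵖ {a * e} := htop ▸ Submodule.mem_top
  obtain ⟨y, hy, z, hz, hyz⟩ := Submodule.mem_sup.mp h1
  obtain ⟨c, rfl⟩ := Submodule.mem_span_singleton.mp hz
  set r : R := c.unop with hr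
  have hcz : c • (a * e) = a * e * r := rfl
  -- x := a*e*r is nilpotent
  have hpow : ∀ k : ℕ, (a * e * r) ^ (k + 1)
      = a * e * ((r * (a * e)) ^ k * r) := by
    intro k
    induction k with
    | zero => simp
    | succ k ih =>
      rw [pow_succ, ih, pow_succ]
      simp only [mul_assoc]
  have hxnil : IsNilpotent (a * e * r) := by
    refine ⟨n + 1, ?_⟩
    have hrep : (r * (a * e)) ^ n = 0 := by
      have := hlist (List.replicate n r) List.length_replicate
      simpa [List.map_replicate, List.prod_replicate] using this
    rw [hpow n, hrep, zero_mul, mul_zero]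
  have hyx : y = 1 - a * e * r := by rw [← hyz, hcz, add_sub_cancel_right]
  obtain ⟨u, hu⟩ := hxnil.isUnit_one_sub
  have h1I : (1 : R) ∈ I := by
    have : (op ((↑u⁻¹ : Rˣ) : R)) • y ∈ I := I.smul_mem _ hy
    rwa [op_smul_eq_mul, hyx, ← hu, Units.mul_inv] at this
  refine hI.1 ?_
  rw [eq_top_iff]
  intro w _
  have : (op w) • (1 : R) ∈ I := I.smul_mem _ h1I
  rwa [op_smul_eq_mul, one_mul] at this
end

section
/- Every right quasi-duo ring R satisfies N(R) ⊆ δ(R): every nilpotent element of R lies in every essential maximal right ideal of R. -/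
open MulOpposite

/-- Every right quasi-duo ring `R` (every maximal right ideal is two-sided) satisfies
`N(R) ⊆ δ(R)`: every nilpotent element lies in the Zhou radical. -/
theorem right_quasiDuo_nilpotents_in_zhouRadical (R : Type*) [Ring R]
    (hrqd : ∀ I : Submodule Rᵐᵒᵖ R, IsCoatom I → ∀ r : R, ∀ x ∈ I, r * x ∈ I) :
    ∀ a : R, IsNilpotent a → a ∈ zhouRadical R := by
  rintro a ⟨n, hn⟩ I hI _
  have key : ∀ m : ℕ, ∀ b : R, b ^ m ∈ I → b ∈ I := by
    intro m
    induction m with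
    | zero =>
      intro b hb
      rw [pow_zero] at hb
      exact absurd (Submodule.eq_top_iff'.mpr fun x => by
        simpa using I.smul_mem (op x) hb) hI.1
    | succ k ih =>
      intro b hb
      by_cases hbk : b ^ k ∈ I
      · exact ih b hbk
      · have hlt : I < I ⊔ Submodule.span Rᵐᵒᵖ {b ^ k} := by
          refine lt_of_le_of_ne le_sup_left fun h => hbk ?_
          exact h ▸ Submodule.mem_sup_right (Submodule.mem_span_singleton_self _)
        have htop := hI.2 _ hlt
        have h1 : (1 : R) ∈ I ⊔ Submodule.span Rᵐᵒᵖ {b ^ k} := htop ▸ trivial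
        obtain ⟨x, hx, y, hy, hxy⟩ := Submodule.mem_sup.mp h1
        obtain ⟨c, hc⟩ := Submodule.mem_span_singleton.mp hy
        have hb2 : b = b * x + c • b ^ (k + 1) := by
          have h : b * x + c • b ^ (k + 1) = b * (x + y) := by
            rw [← hc]
            simp [MulOpposite.smul_eq_mul_unop, pow_succ', mul_add, mul_assoc]
          rw [h, hxy, mul_one]
        rw [hb2]
        exact I.add_mem (hrqd I hI b x hx) (I.smul_mem c hb)
  exact key n a (hn ▸ I.zero_mem)
end

section
/- Let R be a ring and S = {(r,s) ∈ R × R : r − s ∈ δ(R)}, a subring of R × R. Then δ(S) = {(r,s) ∈ δ(R) × δ(R) : r − s ∈ δ(R)} = δ(R) × δ(R). -/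
open MulOpposite

section ZhouAux

variable {R : Type*} [Ring R]

lemma delta_zero : (0:R) ∈ zhouRadical R := fun I _ _ => I.zero_mem

lemma delta_add {x y : R} (hx : x ∈ zhouRadical R) (hy : y ∈ zhouRadical R) :
    x + y ∈ zhouRadical R := fun I h1 h2 => I.add_mem (hx I h1 h2) (hy I h1 h2)

lemma delta_neg {x : R} (hx : x ∈ zhouRadical R) : -x ∈ zhouRadical R :=
  fun I h1 h2 => I.neg_mem (hx I h1 h2)

lemma delta_sub {x y : R} (hx : x ∈ zhouRadical R) (hy : y ∈ zhouRadical R) :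
    x - y ∈ zhouRadical R := fun I h1 h2 => I.sub_mem (hx I h1 h2) (hy I h1 h2)

lemma delta_mul_right {x : R} (t : R) (hx : x ∈ zhouRadical R) : x * t ∈ zhouRadical R :=
  fun I h1 h2 => by simpa [op_smul_eq_mul] using I.smul_mem (op t) (hx I h1 h2)

lemma delta_mul_left (a : R) {x : R} (hx : x ∈ zhouRadical R) : a * x ∈ zhouRadical R := by
  intro I hco hess
  let f : R →ₗ[Rᵐᵒᵖ] R :=
    { toFun := fun z => a * z
      map_add' := fun z w => mul_add a z w
      map_smul' := fun t z => by
        rw [RingHom.id_apply, ← op_unop t, op_smul_eq_mul, op_smul_eq_mul, mul_assoc] }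
  by_cases htop : Submodule.comap f I = ⊤
  · have hx' : x ∈ Submodule.comap f I := by rw [htop]; trivial
    exact hx'
  · have hco' : IsCoatom (Submodule.comap f I) := by
      refine ⟨htop, ?_⟩
      intro b hb
      obtain ⟨x₀, hx₀b, hx₀⟩ := SetLike.exists_of_lt hb
      have hax₀ : a * x₀ ∉ I := hx₀
      have hsup : I ⊔ Submodule.span Rᵐᵒᵖ {a * x₀} = ⊤ := by
        apply hco.2
        refine lt_of_le_of_ne le_sup_left ?_
        intro h
        exact hax₀ (by rw [h]; exact Submodule.mem_sup_right (Submodule.mem_span_singleton_self _))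
      rw [Submodule.eq_top_iff']
      intro w
      have h1 : a * w ∈ I ⊔ Submodule.span Rᵐᵒᵖ {a * x₀} := by rw [hsup]; trivial
      obtain ⟨i, hi, z, hz, hiz⟩ := Submodule.mem_sup.mp h1
      obtain ⟨t, ht⟩ := Submodule.mem_span_singleton.mp hz
      rw [← op_unop t, op_smul_eq_mul] at ht
      have key : a * (w - x₀ * unop t) ∈ I := by
        have e : a * (w - x₀ * unop t) = i := by
          rw [mul_sub, ← mul_assoc, ht, ← hiz, add_sub_cancel_right]
        rw [e]; exact hi
      have hw1 : w - x₀ * unop t ∈ b := hb.le key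
      have hw2 : x₀ * unop t ∈ b := by
        simpa [op_smul_eq_mul] using b.smul_mem (op (unop t)) hx₀b
      simpa using b.add_mem hw1 hw2
    have hess' : IsEssentialRI R (Submodule.comap f I) := by
      intro K hK
      rw [Submodule.ne_bot_iff] at hK
      obtain ⟨k, hkK, hk0⟩ := hK
      by_cases hak : a * k = 0
      · rw [Submodule.ne_bot_iff]
        exact ⟨k, Submodule.mem_inf.mpr ⟨show a * k ∈ I by rw [hak]; exact I.zero_mem, hkK⟩, hk0⟩
      · have hmap : Submodule.map f K ≠ ⊥ := by
          rw [Submodule.ne_bot_iff]; exact ⟨a * k, ⟨k, hkK, rfl⟩, hak⟩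
        have h2 := hess _ hmap
        rw [Submodule.ne_bot_iff] at h2 ⊢
        obtain ⟨y, hy, hy0⟩ := h2
        rw [Submodule.mem_inf] at hy
        obtain ⟨k', hk'K, hk'⟩ := Submodule.mem_map.mp hy.2
        refine ⟨k', Submodule.mem_inf.mpr ⟨show f k' ∈ I by rw [hk']; exact hy.1, hk'K⟩, ?_⟩
        intro h
        exact hy0 (by rw [← hk', h, map_zero])
    exact hx _ hco' hess'

/-- right-multiplication stability of submodules over `Rᵐᵒᵖ`, elementwise form -/
lemma submodule_mul_mem (I : Submodule Rᵐᵒᵖ R) {x : R} (hx : x ∈ I) (t : R) : x * t ∈ I := by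
  simpa [op_smul_eq_mul] using I.smul_mem (op t) hx

/-- helpers for sets vs `{0}` -/
lemma ne_singleton_of_mem_s14 {α : Type*} [Zero α] {A : Set α} {x : α} (hx : x ∈ A) (h : x ≠ 0) :
    A ≠ ({0} : Set α) := fun hA => h (by rw [hA] at hx; exact hx)

lemma exists_ne_zero_s14 {α : Type*} [Zero α] {A : Set α} (h0 : (0:α) ∈ A)
    (h : A ≠ ({0} : Set α)) : ∃ x ∈ A, x ≠ 0 := by
  by_contra hc
  push_neg at hc
  exact h (Set.eq_singleton_iff_unique_mem.mpr ⟨h0, hc⟩)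

/-- The pullback set. -/
def pbSet (R : Type*) [Ring R] : Set (R × R) := {p | p.1 - p.2 ∈ zhouRadical R}

lemma pb_mem {p : R × R} : p ∈ pbSet R ↔ p.1 - p.2 ∈ zhouRadical R := Iff.rfl

lemma pb_diag (t : R) : (t, t) ∈ pbSet R := by
  show t - t ∈ zhouRadical R
  rw [sub_self]; exact delta_zero

lemma pb_zero : (0 : R × R) ∈ pbSet R := pb_diag 0

lemma pb_one : ((1:R), (1:R)) ∈ pbSet R := pb_diag 1

lemma pb_add {p q : R × R} (hp : p ∈ pbSet R) (hq : q ∈ pbSet R) : p + q ∈ pbSet R := by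
  show (p + q).1 - (p + q).2 ∈ zhouRadical R
  have e : (p + q).1 - (p + q).2 = (p.1 - p.2) + (q.1 - q.2) := by
    rw [Prod.fst_add, Prod.snd_add]; abel
  rw [e]; exact delta_add hp hq

lemma pb_neg {p : R × R} (hp : p ∈ pbSet R) : -p ∈ pbSet R := by
  show (-p).1 - (-p).2 ∈ zhouRadical R
  have e : (-p).1 - (-p).2 = -(p.1 - p.2) := by rw [Prod.fst_neg, Prod.snd_neg]; abel
  rw [e]; exact delta_neg hp

lemma pb_sub {p q : R × R} (hp : p ∈ pbSet R) (hq : q ∈ pbSet R) : p - q ∈ pbSet R := by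
  rw [sub_eq_add_neg]; exact pb_add hp (pb_neg hq)

lemma pb_mul {p q : R × R} (hp : p ∈ pbSet R) (hq : q ∈ pbSet R) : p * q ∈ pbSet R := by
  show (p * q).1 - (p * q).2 ∈ zhouRadical R
  have e : (p * q).1 - (p * q).2 = p.1 * (q.1 - q.2) + (p.1 - p.2) * q.2 := by
    rw [Prod.fst_mul, Prod.snd_mul, mul_sub, sub_mul]; abel
  rw [e]; exact delta_add (delta_mul_left p.1 hq) (delta_mul_right q.2 hp)

lemma pb_swap {p : R × R} (hp : p ∈ pbSet R) : p.swap ∈ pbSet R := by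
  show p.2 - p.1 ∈ zhouRadical R
  have := delta_neg hp
  rwa [neg_sub] at this

end ZhouAux
section ZhouAux2

variable {R : Type*} [Ring R]

/-- first-coordinate pullback ideal of `S`. -/
def J1 (R : Type*) [Ring R] (I : Submodule Rᵐᵒᵖ R) : Set (R × R) :=
  {p | p ∈ pbSet R ∧ p.1 ∈ I}

lemma J1_RI (I : Submodule Rᵐᵒᵖ R) : IsRI (pbSet R) (J1 R I) := by
  refine ⟨fun p hp => hp.1, ⟨pb_zero, I.zero_mem⟩, ?_, ?_, ?_⟩
  · rintro p ⟨hpS, hpI⟩ q ⟨hqS, hqI⟩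
    exact ⟨pb_add hpS hqS, by rw [Prod.fst_add]; exact I.add_mem hpI hqI⟩
  · rintro p ⟨hpS, hpI⟩
    exact ⟨pb_neg hpS, by rw [Prod.fst_neg]; exact I.neg_mem hpI⟩
  · rintro p ⟨hpS, hpI⟩ q hq
    exact ⟨pb_mul hpS hq, by rw [Prod.fst_mul]; exact submodule_mul_mem I hpI q.1⟩

lemma one_one_not_subset {J : Set (R × R)} (hJ : IsRI (pbSet R) J)
    (h : ((1:R), (1:R)) ∈ J) : J = pbSet R := by
  apply Set.Subset.antisymm hJ.1
  intro q hq
  have := hJ.2.2.2.2 _ h q hq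
  rwa [show ((1:R), (1:R)) = (1 : R × R) from rfl, one_mul] at this

lemma J1_max {I : Submodule Rᵐᵒᵖ R} (hco : IsCoatom I) : IsMaxRI (pbSet R) (J1 R I) := by
  refine ⟨J1_RI I, ?_, ?_⟩
  · intro h
    have h11 : ((1:R), (1:R)) ∈ J1 R I := by rw [h]; exact pb_one
    apply hco.1
    rw [Submodule.eq_top_iff']
    intro z
    simpa [op_smul_eq_mul] using I.smul_mem (op z) h11.2
  · intro K hK hJK
    by_cases hKJ : K ⊆ J1 R I
    · left; exact Set.Subset.antisymm hKJ hJK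
    · right
      obtain ⟨p, hpK, hpJ⟩ := Set.not_subset.mp hKJ
      have hpS : p ∈ pbSet R := hK.1 hpK
      have hp1 : p.1 ∉ I := fun h => hpJ ⟨hpS, h⟩
      have hsup : I ⊔ Submodule.span Rᵐᵒᵖ {p.1} = ⊤ := by
        apply hco.2
        refine lt_of_le_of_ne le_sup_left ?_
        intro h
        exact hp1 (by rw [h]; exact Submodule.mem_sup_right (Submodule.mem_span_singleton_self _))
      have h1 : (1:R) ∈ I ⊔ Submodule.span Rᵐᵒᵖ {p.1} := by rw [hsup]; trivial
      obtain ⟨i, hi, z, hz, hiz⟩ := Submodule.mem_sup.mp h1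
      obtain ⟨t, ht⟩ := Submodule.mem_span_singleton.mp hz
      rw [← op_unop t, op_smul_eq_mul] at ht
      have hpu : p * (unop t, unop t) ∈ K := hK.2.2.2.2 p hpK _ (pb_diag (unop t))
      have hd : ((1:R), (1:R)) - p * (unop t, unop t) ∈ J1 R I := by
        refine ⟨pb_sub pb_one (hK.1 hpu), ?_⟩
        have e : (((1:R), (1:R)) - p * (unop t, unop t)).1 = i := by
          rw [Prod.fst_sub, Prod.fst_mul, ht, ← hiz, add_sub_cancel_right]
        rw [e]; exact hi
      have h11 : ((1:R), (1:R)) ∈ K := by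
        have := hK.2.2.1 _ (hJK hd) _ hpu
        simpa using this
      exact one_one_not_subset hK h11

lemma J1_ess {I : Submodule Rᵐᵒᵖ R} (hess : IsEssentialRI R I) :
    IsEssRI (pbSet R) (J1 R I) := by
  intro L hL hL0
  obtain ⟨p, hpL, hp0⟩ := exists_ne_zero_s14 hL.2.1 hL0
  by_cases hp1 : p.1 = 0
  · exact ne_singleton_of_mem_s14 (Set.mem_inter ⟨hL.1 hpL, by rw [hp1]; exact I.zero_mem⟩ hpL) hp0
  · have hspan : Submodule.span Rᵐᵒᵖ {p.1} ≠ ⊥ := by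
      rw [Submodule.ne_bot_iff]
      exact ⟨p.1, Submodule.mem_span_singleton_self _, hp1⟩
    have h2 := hess _ hspan
    rw [Submodule.ne_bot_iff] at h2
    obtain ⟨x, hx, hx0⟩ := h2
    rw [Submodule.mem_inf] at hx
    obtain ⟨t, ht⟩ := Submodule.mem_span_singleton.mp hx.2
    rw [← op_unop t, op_smul_eq_mul] at ht
    have hmem : p * (unop t, unop t) ∈ L := hL.2.2.2.2 p hpL _ (pb_diag (unop t))
    refine ne_singleton_of_mem_s14 (Set.mem_inter ⟨hL.1 hmem, ?_⟩ hmem) ?_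
    · rw [Prod.fst_mul, ht]; exact hx.1
    · intro h
      apply hx0
      rw [← ht]
      simpa using congrArg Prod.fst h

/-- swap transport -/
lemma swap_RI {J : Set (R × R)} (h : IsRI (pbSet R) J) :
    IsRI (pbSet R) (Prod.swap ⁻¹' J) := by
  obtain ⟨h1, h2, h3, h4, h5⟩ := h
  refine ⟨fun p hp => ?_, ?_, ?_, ?_, ?_⟩
  · have := pb_swap (h1 hp)
    simpa using this
  · show (0 : R × R).swap ∈ J
    simpa using h2
  · intro p hp q hq
    show (p + q).swap ∈ J
    exact h3 _ hp _ hq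
  · intro p hp
    show (-p).swap ∈ J
    exact h4 _ hp
  · intro p hp q hq
    show (p * q).swap ∈ J
    exact h5 _ hp _ (pb_swap hq)

lemma swap_max {J : Set (R × R)} (h : IsMaxRI (pbSet R) J) :
    IsMaxRI (pbSet R) (Prod.swap ⁻¹' J) := by
  refine ⟨swap_RI h.1, ?_, ?_⟩
  · intro hEq
    apply h.2.1
    apply Set.Subset.antisymm h.1.1
    intro p hp
    have hswap : p.swap ∈ Prod.swap ⁻¹' J := by rw [hEq]; exact pb_swap hp
    simpa using hswap
  · intro K hK hJK
    have h1 : J ⊆ Prod.swap ⁻¹' K := by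
      intro p hp
      show p.swap ∈ K
      apply hJK
      show p.swap.swap ∈ J
      simpa using hp
    rcases h.2.2 _ (swap_RI hK) h1 with h2 | h2
    · left
      rw [← h2]
      ext p
      simp
    · right
      apply Set.Subset.antisymm hK.1
      intro p hp
      have hswap : p.swap ∈ Prod.swap ⁻¹' K := by rw [h2]; exact pb_swap hp
      simpa using hswap

lemma swap_ess {J : Set (R × R)} (h0J : (0 : R × R) ∈ J) (h : IsEssRI (pbSet R) J) :
    IsEssRI (pbSet R) (Prod.swap ⁻¹' J) := by
  intro L hL hL0
  have hL0' : Prod.swap ⁻¹' L ≠ ({0} : Set (R × R)) := by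
    intro hEq
    apply hL0
    apply Set.eq_singleton_iff_unique_mem.mpr ⟨hL.2.1, ?_⟩
    intro p hp
    have hswap : p.swap ∈ Prod.swap ⁻¹' L := by
      show p.swap.swap ∈ L
      simpa using hp
    rw [hEq] at hswap
    have := congrArg Prod.swap hswap
    simpa using this
  intro hEq
  apply h _ (swap_RI hL) hL0'
  ext p
  simp only [Set.mem_inter_iff, Set.mem_preimage, Set.mem_singleton_iff]
  constructor
  · rintro ⟨hpJ, hpL⟩
    have hmem : p.swap ∈ (Prod.swap ⁻¹' J) ∩ L := by
      refine ⟨?_, hpL⟩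
      show p.swap.swap ∈ J
      simpa using hpJ
    rw [hEq] at hmem
    have := congrArg Prod.swap hmem
    simpa using this
  · rintro rfl
    exact ⟨h0J, by simpa using hL.2.1⟩

end ZhouAux2
section ZhouAux3

variable {R : Type*} [Ring R]

lemma zero_col {J : Set (R × R)} (hmax : IsMaxRI (pbSet R) J) :
    (∀ s ∈ zhouRadical R, ((0:R), s) ∈ J) ∨ (∀ d ∈ zhouRadical R, (d, (0:R)) ∈ J) := by
  by_cases h : ∀ d ∈ zhouRadical R, (d, (0:R)) ∈ J
  · exact Or.inr h
  · left
    push_neg at h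
    obtain ⟨d, hdδ, hdJ⟩ := h
    have hrow : ∀ e ∈ zhouRadical R, ((e : R), (0:R)) ∈ pbSet R := by
      intro e he
      show e - 0 ∈ zhouRadical R
      rwa [sub_zero]
    set K : Set (R × R) := {p | ∃ q ∈ J, ∃ e ∈ zhouRadical R, p = q + (e, 0)} with hKdef
    have hKRI : IsRI (pbSet R) K := by
      refine ⟨?_, ⟨0, hmax.1.2.1, 0, delta_zero, by simp; rfl⟩, ?_, ?_, ?_⟩
      · rintro p ⟨q, hq, e, he, rfl⟩
        exact pb_add (hmax.1.1 hq) (hrow e he)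
      · rintro p ⟨q, hq, e, he, rfl⟩ p' ⟨q', hq', e', he', rfl⟩
        refine ⟨q + q', hmax.1.2.2.1 _ hq _ hq', e + e', delta_add he he', ?_⟩
        rw [show ((e + e' : R), (0:R)) = ((e:R), (0:R)) + ((e':R), (0:R)) from by
          rw [Prod.mk_add_mk, add_zero]]
        abel
      · rintro p ⟨q, hq, e, he, rfl⟩
        refine ⟨-q, hmax.1.2.2.2.1 _ hq, -e, delta_neg he, ?_⟩
        rw [show ((-e : R), (0:R)) = -((e:R), (0:R)) from by rw [Prod.neg_mk, neg_zero]]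
        abel
      · rintro p ⟨q, hq, e, he, rfl⟩ y hy
        refine ⟨q * y, hmax.1.2.2.2.2 _ hq _ hy, e * y.1, delta_mul_right y.1 he, ?_⟩
        have he' : ((e:R), (0:R)) * y = ((e * y.1 : R), (0:R)) := by
          ext <;> simp
        rw [add_mul, he']
    have hJK : J ⊆ K := fun p hp => ⟨p, hp, 0, delta_zero, by simp⟩
    have hdK : ((d : R), (0:R)) ∈ K := ⟨0, hmax.1.2.1, d, hdδ, by simp⟩
    have hKne : K ≠ J := fun h => hdJ (h ▸ hdK)
    rcases hmax.2.2 K hKRI hJK with h2 | h2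
    · exact absurd h2 hKne
    · have h11 : ((1:R), (1:R)) ∈ K := by rw [h2]; exact pb_one
      obtain ⟨q, hq, e, he, heq⟩ := h11
      have hq1 : q = ((1:R) - e, (1:R)) := by
        have : q = ((1:R), (1:R)) - ((e:R), (0:R)) := by rw [heq]; abel
        rw [this, Prod.mk_sub_mk, sub_zero]
      intro s hsδ
      have hmem : q * ((0:R), s) ∈ J := by
        apply hmax.1.2.2.2.2 _ hq
        show (0:R) - s ∈ zhouRadical R
        rw [zero_sub]; exact delta_neg hsδ
      have e2 : q * ((0:R), s) = ((0:R), s) := by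
        rw [hq1]; ext <;> simp
      rwa [e2] at hmem

lemma mem_of_left_col {J : Set (R × R)} (hmax : IsMaxRI (pbSet R) J)
    (hess : IsEssRI (pbSet R) J) (h0 : ∀ s ∈ zhouRadical R, ((0:R), s) ∈ J)
    {a b : R} (ha : a ∈ zhouRadical R) (hb : b ∈ zhouRadical R) : (a, b) ∈ J := by
  -- the projection of J to the first coordinate
  let I : Submodule Rᵐᵒᵖ R :=
    { carrier := {r | ∃ s, (r, s) ∈ J}
      add_mem' := by
        rintro x y ⟨s, hs⟩ ⟨s', hs'⟩
        exact ⟨s + s', hmax.1.2.2.1 _ hs _ hs'⟩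
      zero_mem' := ⟨0, hmax.1.2.1⟩
      smul_mem' := by
        rintro t x ⟨s, hs⟩
        refine ⟨s * unop t, ?_⟩
        rw [← op_unop t, op_smul_eq_mul]
        exact hmax.1.2.2.2.2 _ hs (unop t, unop t) (pb_diag _) }
    -- (1,1) ∉ J
  have hJ11 : ((1:R), (1:R)) ∉ J := fun h => hmax.2.1 (one_one_not_subset hmax.1 h)
  have hInetop : I ≠ ⊤ := by
    intro h
    have h1 : (1:R) ∈ I := by rw [h]; trivial
    obtain ⟨s, hs⟩ := h1
    have hsδ : (1:R) - s ∈ zhouRadical R := hmax.1.1 hs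
    have hadd := hmax.1.2.2.1 _ hs _ (h0 _ hsδ)
    have e : ((1:R), s) + ((0:R), (1:R) - s) = ((1:R), (1:R)) := by
      rw [Prod.mk_add_mk, add_zero]
      congr 1
      abel
    rw [e] at hadd
    exact hJ11 hadd
  have hIco : IsCoatom I := by
    refine ⟨hInetop, ?_⟩
    intro b' hb'
    obtain ⟨r, hrb, hrI⟩ := SetLike.exists_of_lt hb'
    set K : Set (R × R) := {p | p ∈ pbSet R ∧ p.1 ∈ I ⊔ Submodule.span Rᵐᵒᵖ {r}} with hKdef
    have hKRI : IsRI (pbSet R) K := by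
      refine ⟨fun p hp => hp.1, ⟨pb_zero, Submodule.zero_mem _⟩, ?_, ?_, ?_⟩
      · rintro p ⟨hpS, hpI⟩ q ⟨hqS, hqI⟩
        exact ⟨pb_add hpS hqS, by rw [Prod.fst_add]; exact Submodule.add_mem _ hpI hqI⟩
      · rintro p ⟨hpS, hpI⟩
        exact ⟨pb_neg hpS, by rw [Prod.fst_neg]; exact Submodule.neg_mem _ hpI⟩
      · rintro p ⟨hpS, hpI⟩ q hq
        exact ⟨pb_mul hpS hq, by rw [Prod.fst_mul]; exact submodule_mul_mem _ hpI q.1⟩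
    have hJK : J ⊆ K := by
      intro p hp
      refine ⟨hmax.1.1 hp, Submodule.mem_sup_left ⟨p.2, ?_⟩⟩
      rw [Prod.mk.eta]; exact hp
    have hrrK : (r, r) ∈ K :=
      ⟨pb_diag r, Submodule.mem_sup_right (Submodule.mem_span_singleton_self r)⟩
    have hKne : K ≠ J := fun h => hrI ⟨r, h ▸ hrrK⟩
    rcases hmax.2.2 K hKRI hJK with h2 | h2
    · exact absurd h2 hKne
    · have h11 : ((1:R), (1:R)) ∈ K := by rw [h2]; exact pb_one
      have hle : I ⊔ Submodule.span Rᵐᵒᵖ {r} ≤ b' := by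
        refine sup_le hb'.le ?_
        rw [Submodule.span_le, Set.singleton_subset_iff]
        exact hrb
      have h1b : (1:R) ∈ b' := hle h11.2
      rw [Submodule.eq_top_iff']
      intro z
      simpa [op_smul_eq_mul] using b'.smul_mem (op z) h1b
  have hIess : IsEssentialRI R I := by
    intro K hK
    rw [Submodule.ne_bot_iff] at hK ⊢
    by_cases hKδ : ∃ k ∈ K, k ∈ zhouRadical R ∧ k ≠ 0
    · obtain ⟨k, hkK, hkδ, hk0⟩ := hKδ
      set L : Set (R × R) := {p | p.1 ∈ K ∧ p.1 ∈ zhouRadical R ∧ p.2 = 0} with hLdef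
      have hLRI : IsRI (pbSet R) L := by
        refine ⟨?_, show (0:R×R) ∈ L from ⟨K.zero_mem, delta_zero, rfl⟩, ?_, ?_, ?_⟩
        · rintro p ⟨h1, h2, h3⟩
          show p.1 - p.2 ∈ zhouRadical R
          rw [h3, sub_zero]; exact h2
        · rintro p ⟨h1, h2, h3⟩ q ⟨h1', h2', h3'⟩
          exact ⟨by rw [Prod.fst_add]; exact K.add_mem h1 h1',
                 by rw [Prod.fst_add]; exact delta_add h2 h2',
                 by rw [Prod.snd_add, h3, h3', add_zero]⟩
        · rintro p ⟨h1, h2, h3⟩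
          exact ⟨by rw [Prod.fst_neg]; exact K.neg_mem h1,
                 by rw [Prod.fst_neg]; exact delta_neg h2,
                 by rw [Prod.snd_neg, h3, neg_zero]⟩
        · rintro p ⟨h1, h2, h3⟩ q hq
          exact ⟨by rw [Prod.fst_mul]; exact submodule_mul_mem K h1 q.1,
                 by rw [Prod.fst_mul]; exact delta_mul_right q.1 h2,
                 by rw [Prod.snd_mul, h3, zero_mul]⟩
      have hL0 : L ≠ ({0} : Set (R × R)) := by
        refine ne_singleton_of_mem_s14 (show ((k:R), (0:R)) ∈ L from ⟨hkK, hkδ, rfl⟩) ?_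
        intro h
        exact hk0 (congrArg Prod.fst h)
      obtain ⟨p, hp, hp0⟩ := exists_ne_zero_s14
        (Set.mem_inter hmax.1.2.1 (show (0:R×R) ∈ L from ⟨K.zero_mem, delta_zero, rfl⟩)) (hess L hLRI hL0)
      refine ⟨p.1, Submodule.mem_inf.mpr ⟨⟨p.2, by rw [Prod.mk.eta]; exact hp.1⟩, hp.2.1⟩, ?_⟩
      intro h
      exact hp0 (Prod.ext_iff.mpr ⟨h, hp.2.2.2⟩)
    · push_neg at hKδ
      obtain ⟨k, hkK, hk0⟩ := hK
      set L : Set (R × R) := {p | p.1 ∈ K ∧ p.2 ∈ K ∧ p ∈ pbSet R} with hLdef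
      have hLRI : IsRI (pbSet R) L := by
        refine ⟨fun p hp => hp.2.2, show (0:R×R) ∈ L from ⟨K.zero_mem, K.zero_mem, pb_zero⟩, ?_, ?_, ?_⟩
        · rintro p ⟨h1, h2, h3⟩ q ⟨h1', h2', h3'⟩
          exact ⟨by rw [Prod.fst_add]; exact K.add_mem h1 h1',
                 by rw [Prod.snd_add]; exact K.add_mem h2 h2', pb_add h3 h3'⟩
        · rintro p ⟨h1, h2, h3⟩
          exact ⟨by rw [Prod.fst_neg]; exact K.neg_mem h1,
                 by rw [Prod.snd_neg]; exact K.neg_mem h2, pb_neg h3⟩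
        · rintro p ⟨h1, h2, h3⟩ q hq
          exact ⟨by rw [Prod.fst_mul]; exact submodule_mul_mem K h1 q.1,
                 by rw [Prod.snd_mul]; exact submodule_mul_mem K h2 q.2, pb_mul h3 hq⟩
      have hL0 : L ≠ ({0} : Set (R × R)) := by
        refine ne_singleton_of_mem_s14 (show ((k:R), (k:R)) ∈ L from ⟨hkK, hkK, pb_diag k⟩) ?_
        intro h
        exact hk0 (congrArg Prod.fst h)
      obtain ⟨p, hp, hp0⟩ := exists_ne_zero_s14
        (Set.mem_inter hmax.1.2.1 (show (0:R×R) ∈ L from ⟨K.zero_mem, K.zero_mem, pb_zero⟩)) (hess L hLRI hL0)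
      have hp1 : p.1 ≠ 0 := by
        intro h
        have hpδ : p.2 ∈ zhouRadical R := by
          have h3 : p.1 - p.2 ∈ zhouRadical R := hp.2.2.2
          rw [h, zero_sub] at h3
          simpa using delta_neg h3
        exact hp0 (Prod.ext_iff.mpr ⟨h, hKδ _ hp.2.2.1 hpδ⟩)
      exact ⟨p.1, Submodule.mem_inf.mpr ⟨⟨p.2, by rw [Prod.mk.eta]; exact hp.1⟩, hp.2.1⟩, hp1⟩
  -- conclude
  have haI : a ∈ I := ha I hIco hIess
  obtain ⟨s, hs⟩ := haI
  have hsδ : s ∈ zhouRadical R := by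
    have h1 : a - s ∈ zhouRadical R := hmax.1.1 hs
    have := delta_sub ha h1
    rwa [sub_sub_cancel] at this
  have hbs : b - s ∈ zhouRadical R := delta_sub hb hsδ
  have hadd := hmax.1.2.2.1 _ hs _ (h0 _ hbs)
  have e : ((a:R), s) + ((0:R), b - s) = ((a:R), b) := by
    rw [Prod.mk_add_mk, add_zero]
    congr 1
    abel
  rwa [e] at hadd

end ZhouAux3

/-- For the subring `S = {(r, s) ∈ R × R : r − s ∈ δ(R)}` of `R × R`,
`δ(S) = {(r, s) ∈ δ(R) × δ(R) : r − s ∈ δ(R)} = δ(R) × δ(R)`. -/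
theorem zhou_of_pullback (R : Type*) [Ring R] :
    zhouSet {p : R × R | p.1 - p.2 ∈ zhouRadical R} =
      {p : R × R | p.1 ∈ zhouRadical R ∧ p.2 ∈ zhouRadical R ∧
        p.1 - p.2 ∈ zhouRadical R} ∧
    zhouSet {p : R × R | p.1 - p.2 ∈ zhouRadical R} =
      (zhouRadical R) ×ˢ (zhouRadical R) := by
  have hfirst : zhouSet (pbSet R) =
      {p : R × R | p.1 ∈ zhouRadical R ∧ p.2 ∈ zhouRadical R ∧
        p.1 - p.2 ∈ zhouRadical R} := by
    ext p
    constructor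
    · rintro ⟨hpS, hpJ⟩
      refine ⟨?_, ?_, hpS⟩
      · intro I hco hessI
        exact (hpJ _ (J1_max hco) (J1_ess hessI)).2
      · intro I hco hessI
        have hmem := hpJ _ (swap_max (J1_max hco))
          (swap_ess (J1_max hco).1.2.1 (J1_ess hessI))
        exact (show p.swap ∈ J1 R I from hmem).2
    · rintro ⟨h1, h2, h3⟩
      refine ⟨h3, ?_⟩
      intro J hJmax hJess
      rcases zero_col hJmax with h | h
      · have hmem := mem_of_left_col hJmax hJess h h1 h2
        simpa using hmem
      · have h' : ∀ s ∈ zhouRadical R, ((0:R), s) ∈ Prod.swap ⁻¹' J := by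
          intro s hs
          show ((0:R), s).swap ∈ J
          exact h s hs
        have hmem := mem_of_left_col (swap_max hJmax)
          (swap_ess hJmax.1.2.1 hJess) h' h2 h1
        have hmem2 : ((p.1 : R), p.2) ∈ J := hmem
        simpa using hmem2
  have hsecond : zhouSet (pbSet R) = (zhouRadical R) ×ˢ (zhouRadical R) := by
    rw [hfirst]
    ext p
    simp only [Set.mem_setOf_eq, Set.mem_prod]
    exact ⟨fun ⟨a, b, _⟩ => ⟨a, b⟩, fun ⟨a, b⟩ => ⟨a, b, delta_sub a b⟩⟩
  exact ⟨hfirst, hsecond⟩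
end

section
/- Let R be a ring, e an idempotent of R, and S = {(r,s) ∈ R × R : r − s ∈ δ(R)}. Then R is Zhou right e-reduced if and only if S is Zhou right (e,e)-reduced. -/
open MulOpposite

-- ===== auxiliary development =====

/-- The pullback subring as a set. -/
def SP (R : Type*) [Ring R] : Set (R × R) := {q : R × R | q.1 - q.2 ∈ zhouRadical R}


section zhouAux
variable {R : Type*} [Ring R]


lemma zr_zero : (0 : R) ∈ zhouRadical R := fun I _ _ => I.zero_mem

lemma zr_add {a b : R} (ha : a ∈ zhouRadical R) (hb : b ∈ zhouRadical R) :
    a + b ∈ zhouRadical R := fun I h1 h2 => I.add_mem (ha I h1 h2) (hb I h1 h2)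

lemma zr_neg {a : R} (ha : a ∈ zhouRadical R) : -a ∈ zhouRadical R :=
  fun I h1 h2 => I.neg_mem (ha I h1 h2)

lemma zr_sub {a b : R} (ha : a ∈ zhouRadical R) (hb : b ∈ zhouRadical R) :
    a - b ∈ zhouRadical R := by
  rw [sub_eq_add_neg]; exact zr_add ha (zr_neg hb)

lemma zr_mulR {a : R} (ha : a ∈ zhouRadical R) (r : R) : a * r ∈ zhouRadical R :=
  fun I h1 h2 => I.smul_mem (op r) (ha I h1 h2)

/-- left multiplication as an `Rᵐᵒᵖ`-linear map -/
def lmul (a : R) : R →ₗ[Rᵐᵒᵖ] R where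
  toFun r := a * r
  map_add' x y := mul_add a x y
  map_smul' m x := by
    simp only [RingHom.id_apply]
    show a * (x * m.unop) = (a * x) * m.unop
    rw [mul_assoc]

lemma zr_mulL {x : R} (hx : x ∈ zhouRadical R) (a : R) : a * x ∈ zhouRadical R := by
  intro I hco hess
  by_cases hI' : I.comap (lmul a) = ⊤
  · have : x ∈ I.comap (lmul a) := by rw [hI']; trivial
    exact this
  · have hco' : IsCoatom (I.comap (lmul a)) := by
      refine ⟨hI', fun L hL => ?_⟩
      obtain ⟨z, hzL, hz⟩ := SetLike.exists_of_lt hL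
      have haz : a * z ∉ I := hz
      have hsup : I ⊔ Submodule.span Rᵐᵒᵖ {a * z} = ⊤ := by
        refine hco.2 _ ?_
        refine lt_of_le_of_ne le_sup_left fun h => haz ?_
        have : Submodule.span Rᵐᵒᵖ {a * z} ≤ I := by rw [h]; exact le_sup_right
        exact this (Submodule.mem_span_singleton_self _)
      obtain ⟨i, hi, y, hy, hiy⟩ := Submodule.mem_sup.mp (hsup ▸ Submodule.mem_top : a ∈ _)
      obtain ⟨m, hm⟩ := Submodule.mem_span_singleton.mp hy
      have hy' : y = (a * z) * m.unop := hm.symm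
      have h1 : (1 : R) - z * m.unop ∈ I.comap (lmul a) := by
        show a * (1 - z * m.unop) ∈ I
        have heq : a * (1 - z * m.unop) = i := by
          rw [mul_sub, mul_one, ← mul_assoc, ← hy']
          rw [← hiy]; abel
        rw [heq]; exact hi
      have h2 : z * m.unop ∈ L := L.smul_mem m hzL
      have h1' : (1 : R) ∈ L := by
        have := L.add_mem (hL.le h1) h2
        simpa using this
      refine Submodule.eq_top_iff'.mpr fun r => ?_
      simpa using L.smul_mem (op r) h1'
    have hess' : IsEssentialRI R (I.comap (lmul a)) := by
      intro K hK
      intro hbot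
      apply hK
      have hmap : I ⊓ K.map (lmul a) = ⊥ := by
        refine (Submodule.eq_bot_iff _).mpr fun y ⟨hyI, hyK⟩ => ?_
        obtain ⟨k, hk, rfl⟩ := hyK
        have : k ∈ I.comap (lmul a) ⊓ K := ⟨hyI, hk⟩
        rw [hbot] at this
        simp only [Submodule.mem_bot] at this
        subst this
        simp [lmul]
      have hKmap : K.map (lmul a) = ⊥ := by
        by_contra h
        exact hess _ h hmap
      refine (Submodule.eq_bot_iff _).mpr fun k hk => ?_
      have hak : a * k = 0 := by
        have : (lmul a) k ∈ K.map (lmul a) := Submodule.mem_map_of_mem hk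
        rw [hKmap] at this
        simpa [lmul] using this
      have hkI' : k ∈ I.comap (lmul a) := by
        show a * k ∈ I
        rw [hak]; exact I.zero_mem
      have : k ∈ I.comap (lmul a) ⊓ K := ⟨hkI', hk⟩
      rw [hbot] at this
      simpa using this
    exact hx _ hco' hess'




lemma SP_add {p q : R × R} (hp : p ∈ SP R) (hq : q ∈ SP R) : p + q ∈ SP R := by
  have : (p + q).1 - (p + q).2 = (p.1 - p.2) + (q.1 - q.2) := by
    simp only [Prod.fst_add, Prod.snd_add]; abel
  show _ ∈ zhouRadical R
  rw [this]; exact zr_add hp hq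

lemma SP_neg {p : R × R} (hp : p ∈ SP R) : -p ∈ SP R := by
  have : (-p).1 - (-p).2 = -(p.1 - p.2) := by
    simp only [Prod.fst_neg, Prod.snd_neg]; abel
  show _ ∈ zhouRadical R
  rw [this]; exact zr_neg hp

lemma SP_mul {p q : R × R} (hp : p ∈ SP R) (hq : q ∈ SP R) : p * q ∈ SP R := by
  have : (p * q).1 - (p * q).2 = p.1 * (q.1 - q.2) + (p.1 - p.2) * q.2 := by
    show p.1 * q.1 - p.2 * q.2 = _
    noncomm_ring
  show _ ∈ zhouRadical R
  rw [this]; exact zr_add (zr_mulL hq p.1) (zr_mulR hp q.2)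

lemma SP_diag (t : R) : ((t, t) : R × R) ∈ SP R := by
  show t - t ∈ zhouRadical R
  rw [sub_self]; exact zr_zero

lemma SP_left {x : R} (hx : x ∈ zhouRadical R) (t : R) : ((t + x, t) : R × R) ∈ SP R := by
  show t + x - t ∈ zhouRadical R
  simpa using hx

lemma SP_right {x : R} (hx : x ∈ zhouRadical R) (t : R) : ((t, t + x) : R × R) ∈ SP R := by
  show t - (t + x) ∈ zhouRadical R
  have : t - (t + x) = -x := by abel
  rw [this]; exact zr_neg hx

lemma SP_mk_zero {x : R} (hx : x ∈ zhouRadical R) : (((0 : R), x) : R × R) ∈ SP R := by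
  simpa using SP_right hx 0

/-- Key lemma: every essential maximal right ideal of `SP R` contains `0 × δ(R)`. -/
lemma key2 {J : Set (R × R)} (hmax : IsMaxRI (SP R) J) (hess : IsEssRI (SP R) J)
    {d : R} (hd : d ∈ zhouRadical R) : (((0 : R), d) : R × R) ∈ J := by
  obtain ⟨⟨hJS, hJ0, hJadd, hJneg, hJmul⟩, hJne, hJtop⟩ := hmax
  by_contra hdJ
  set E : Set R := {x | (((0 : R), x) : R × R) ∈ J} with hEdef
  have hED : ∀ x ∈ E, x ∈ zhouRadical R := by
    intro x hx
    have h := hJS hx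
    have h' : (0 : R) - x ∈ zhouRadical R := h
    simpa using zr_neg h'
  have hE0 : (0 : R) ∈ E := by
    show (((0 : R), (0 : R)) : R × R) ∈ J
    exact hJ0
  have hEadd : ∀ a ∈ E, ∀ b ∈ E, a + b ∈ E := by
    intro a ha b hb
    have := hJadd _ ha _ hb
    simpa [Prod.mk_add_mk, hEdef] using this
  have hEneg : ∀ a ∈ E, -a ∈ E := by
    intro a ha
    have := hJneg _ ha
    simpa [Prod.neg_mk, hEdef] using this
  have hEmul : ∀ a ∈ E, ∀ r : R, a * r ∈ E := by
    intro a ha r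
    have := hJmul _ ha (r, r) (SP_diag r)
    simpa [Prod.mk_mul_mk, hEdef] using this
  -- E is essential in D
  have hEessD : ∀ K : Set R, (∀ k ∈ K, k ∈ zhouRadical R) → (0 : R) ∈ K →
      (∀ a ∈ K, ∀ b ∈ K, a + b ∈ K) → (∀ a ∈ K, -a ∈ K) →
      (∀ a ∈ K, ∀ r : R, a * r ∈ K) → (∀ a ∈ K, a ∈ E → a = 0) → ∀ a ∈ K, a = 0 := by
    intro K hKD hK0 hKadd hKneg hKmul hKE a haK
    by_contra hane
    have hLRI : IsRI (SP R) {p : R × R | p.1 = 0 ∧ p.2 ∈ K} := by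
      refine ⟨?_, ⟨rfl, hK0⟩, ?_, ?_, ?_⟩
      · rintro ⟨p1, p2⟩ ⟨h1, h2⟩
        simp only at h1 h2; subst h1
        exact SP_mk_zero (hKD _ h2)
      · rintro p ⟨h1, h2⟩ q ⟨h3, h4⟩
        exact ⟨by simp [h1, h3], by exact hKadd _ h2 _ h4⟩
      · rintro p ⟨h1, h2⟩
        exact ⟨by simp [h1], hKneg _ h2⟩
      · rintro p ⟨h1, h2⟩ y hy
        exact ⟨by simp [h1], hKmul _ h2 _⟩
    have hLne : {p : R × R | p.1 = 0 ∧ p.2 ∈ K} ≠ ({0} : Set (R × R)) := by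
      intro h
      have : (((0 : R), a) : R × R) ∈ ({0} : Set (R × R)) := by
        rw [← h]; exact ⟨rfl, haK⟩
      simp only [Set.mem_singleton_iff, Prod.ext_iff] at this
      exact hane this.2
    apply hess _ hLRI hLne
    ext p
    simp only [Set.mem_inter_iff, Set.mem_singleton_iff]
    constructor
    · rintro ⟨hpJ, h1, h2⟩
      have : p.2 ∈ E := by
        show (((0 : R), p.2) : R × R) ∈ J
        have : p = ((0 : R), p.2) := by rw [← h1]
        rwa [this] at hpJ
      have hp2 : p.2 = 0 := hKE _ h2 this
      exact Prod.ext h1 hp2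
    · rintro rfl
      exact ⟨hJ0, rfl, hK0⟩
  -- the simplicity engine
  have hsimp : ∀ F : Set R, (∀ y ∈ F, y ∈ zhouRadical R) → (∀ x ∈ E, x ∈ F) →
      (∀ a ∈ F, ∀ b ∈ F, a + b ∈ F) → (∀ a ∈ F, -a ∈ F) →
      (∀ a ∈ F, ∀ r : R, a * r ∈ F) → (∃ f ∈ F, f ∉ E) →
      (∀ x ∈ zhouRadical R, x ∈ F) ∧ ∃ δ ∈ F, (((1 : R), 1 - δ) : R × R) ∈ J := by
    intro F hFD hEF hFadd hFneg hFmul ⟨f, hfF, hfE⟩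
    set KF : Set (R × R) := {p | ∃ q ∈ J, ∃ x ∈ F, p = q + ((0 : R), x)} with hKFdef
    have hKFRI : IsRI (SP R) KF := by
      refine ⟨?_, ⟨0, hJ0, 0, by simpa using hEF _ hE0, by simp; rfl⟩, ?_, ?_, ?_⟩
      · rintro p ⟨q, hq, x, hx, rfl⟩
        exact SP_add (hJS hq) (SP_mk_zero (hFD _ hx))
      · rintro p ⟨q, hq, x, hx, rfl⟩ p' ⟨q', hq', x', hx', rfl⟩
        refine ⟨q + q', hJadd _ hq _ hq', x + x', hFadd _ hx _ hx', ?_⟩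
        have hxx : (((0 : R), x) : R × R) + ((0 : R), x') = ((0 : R), x + x') := by
          rw [Prod.mk_add_mk, add_zero]
        rw [← hxx]; abel
      · rintro p ⟨q, hq, x, hx, rfl⟩
        refine ⟨-q, hJneg _ hq, -x, hFneg _ hx, ?_⟩
        have hxx : (((0 : R), -x) : R × R) = -((0 : R), x) := by
          rw [Prod.neg_mk, neg_zero]
        rw [hxx]; abel
      · rintro p ⟨q, hq, x, hx, rfl⟩ y hy
        refine ⟨q * y, hJmul _ hq _ hy, x * y.2, hFmul _ hx _, ?_⟩
        rw [add_mul]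
        congr 1
        show ((0 : R), x) * (y.1, y.2) = _
        rw [Prod.mk_mul_mk, zero_mul]
    have hJKF : J ⊆ KF := fun q hq => ⟨q, hq, 0, by simpa using hEF _ hE0, by simp⟩
    rcases hJtop KF hKFRI hJKF with hKFJ | hKFS
    · exfalso
      have : (((0 : R), f) : R × R) ∈ KF := ⟨0, hJ0, f, hfF, by simp⟩
      rw [hKFJ] at this
      exact hfE this
    · constructor
      · intro x hx
        have hxS : (((0 : R), x) : R × R) ∈ SP R := SP_mk_zero hx
        rw [← hKFS] at hxS
        obtain ⟨q, hq, x', hx', heq⟩ := hxS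
        have hq' : q = (((0 : R), x - x') : R × R) := by
          have : q = ((0 : R), x) - ((0 : R), x') := by rw [heq]; abel
          rw [this, Prod.mk_sub_mk, sub_zero]
        have : x - x' ∈ E := by
          show (((0 : R), x - x') : R × R) ∈ J
          rwa [hq'] at hq
        have := hFadd _ (hEF _ this) _ hx'
        simpa using this
      · have h11 : (((1 : R), (1 : R)) : R × R) ∈ SP R := SP_diag 1
        rw [← hKFS] at h11
        obtain ⟨q, hq, δ, hδ, heq⟩ := h11
        refine ⟨δ, hδ, ?_⟩
        have hq' : q = (((1 : R), 1 - δ) : R × R) := by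
          have : q = ((1 : R), (1 : R)) - ((0 : R), δ) := by rw [heq]; abel
          rw [this, Prod.mk_sub_mk, sub_zero]
        rwa [hq'] at hq
  -- apply the engine to F = D to get δ
  obtain ⟨-, δ, hδD, h1δ⟩ := hsimp (zhouRadical R) (fun y hy => hy) hED
    (fun a ha b hb => zr_add ha hb) (fun a ha => zr_neg ha) (fun a ha r => zr_mulR ha r)
    ⟨d, hd, hdJ⟩
  -- (1 - δ) * D ⊆ E
  have h1mD : ∀ x ∈ zhouRadical R, (1 - δ) * x ∈ E := by
    intro x hx
    have ha := hJmul _ h1δ ((1 : R), 1 + x) (by simpa using SP_right hx 1)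
    have hb := hJmul _ h1δ ((1 : R), (1 : R)) (SP_diag 1)
    have hc := hJadd _ ha _ (hJneg _ hb)
    have heq : ((1 : R), 1 - δ) * ((1 : R), 1 + x) + -(((1 : R), 1 - δ) * ((1 : R), (1 : R)))
        = (((0 : R), (1 - δ) * x) : R × R) := by
      rw [Prod.mk_mul_mk, Prod.mk_mul_mk, Prod.neg_mk, Prod.mk_add_mk]
      refine Prod.ext (by simp) ?_
      show (1 - δ) * (1 + x) + -((1 - δ) * 1) = (1 - δ) * x
      noncomm_ring
    rw [heq] at hc
    exact hc
  -- D ⬝ D ⊆ E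
  have hD2 : ∀ c ∈ zhouRadical R, ∀ x ∈ zhouRadical R, c * x ∈ E := by
    intro c hc x hx
    by_cases hcE : c ∈ E
    · exact hEmul _ hcE x
    · set I' : Submodule Rᵐᵒᵖ R :=
        { carrier := {r | c * r ∈ E}
          add_mem' := fun {a b} ha hb => by
            show c * (a + b) ∈ E
            rw [mul_add]; exact hEadd _ ha _ hb
          zero_mem' := by show c * 0 ∈ E; rw [mul_zero]; exact hE0
          smul_mem' := fun m r hr => by
            show c * (r * m.unop) ∈ E
            rw [← mul_assoc]; exact hEmul _ hr _ } with hI'def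
      have hmemI' : ∀ r : R, r ∈ I' ↔ c * r ∈ E := fun r => Iff.rfl
      have hcoI : IsCoatom I' := by
        constructor
        · intro h
          apply hcE
          have : (1 : R) ∈ I' := by rw [h]; trivial
          simpa using (hmemI' 1).mp this
        · intro L hL
          obtain ⟨z, hzL, hz⟩ := SetLike.exists_of_lt hL
          have hczE : c * z ∉ E := hz
          set F : Set R := {y | y ∈ zhouRadical R ∧ ∃ t, t ∈ L ∧ y - c * t ∈ E} with hFdef
          have hFprops := hsimp F (fun y hy => hy.1)
            (fun x hx => ⟨hED _ hx, 0, L.zero_mem, by simpa using hx⟩)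
            (fun a ha b hb => by
              obtain ⟨haD, t, htL, htE⟩ := ha
              obtain ⟨hbD, t', htL', htE'⟩ := hb
              refine ⟨zr_add haD hbD, t + t', L.add_mem htL htL', ?_⟩
              have : a + b - c * (t + t') = (a - c * t) + (b - c * t') := by
                rw [mul_add]; abel
              rw [this]; exact hEadd _ htE _ htE')
            (fun a ha => by
              obtain ⟨haD, t, htL, htE⟩ := ha
              refine ⟨zr_neg haD, -t, L.neg_mem htL, ?_⟩
              have : -a - c * (-t) = -(a - c * t) := by rw [mul_neg]; abel
              rw [this]; exact hEneg _ htE)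
            (fun a ha r => by
              obtain ⟨haD, t, htL, htE⟩ := ha
              refine ⟨zr_mulR haD r, t * r, by simpa using L.smul_mem (op r) htL, ?_⟩
              have : a * r - c * (t * r) = (a - c * t) * r := by
                rw [sub_mul, mul_assoc]
              rw [this]; exact hEmul _ htE r)
            ⟨c * z, ⟨zr_mulR hc z, z, hzL, by simpa using hE0⟩, hczE⟩
          have hDF : ∀ x ∈ zhouRadical R, x ∈ F := hFprops.1
          refine Submodule.eq_top_iff'.mpr fun r => ?_
          obtain ⟨-, t, htL, htE⟩ := hDF (c * r) (zr_mulR hc r)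
          have : r - t ∈ I' := by
            show c * (r - t) ∈ E
            rw [mul_sub]; exact htE
          have := L.add_mem (hL.le this) htL
          simpa using this
      have hessI : IsEssentialRI R I' := by
        intro K hKne hbot
        apply hKne
        have hall := hEessD {y | ∃ k ∈ (K : Set R), y = c * k}
          (by rintro y ⟨k, hk, rfl⟩; exact zr_mulR hc k)
          ⟨0, K.zero_mem, (mul_zero c).symm⟩
          (by rintro a ⟨k, hk, rfl⟩ b ⟨k', hk', rfl⟩
              exact ⟨k + k', K.add_mem hk hk', (mul_add c k k').symm⟩)
          (by rintro a ⟨k, hk, rfl⟩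
              exact ⟨-k, K.neg_mem hk, (mul_neg c k).symm⟩)
          (by rintro a ⟨k, hk, rfl⟩ r
              exact ⟨k * r, by simpa using K.smul_mem (op r) hk, mul_assoc c k r⟩)
          (by rintro a ⟨k, hk, rfl⟩ hE'
              have : k ∈ I' ⊓ K := ⟨hE', hk⟩
              rw [hbot] at this
              simp only [Submodule.mem_bot] at this
              rw [this, mul_zero])
        refine (Submodule.eq_bot_iff _).mpr fun k hk => ?_
        have hck : c * k = 0 := hall _ ⟨k, hk, rfl⟩
        have : k ∈ I' ⊓ K := ⟨by show c * k ∈ E; rw [hck]; exact hE0, hk⟩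
        rw [hbot] at this
        simpa using this
      exact hx I' hcoI hessI
  -- conclude d ∈ E, contradiction
  apply hdJ
  show d ∈ E
  have hsum : δ * d + (1 - δ) * d = d := by noncomm_ring
  rw [← hsum]
  exact hEadd _ (hD2 δ hδD d hd) _ (h1mD d hd)

lemma SP_swap {p : R × R} (hp : p ∈ SP R) : ((p.2, p.1) : R × R) ∈ SP R := by
  show p.2 - p.1 ∈ zhouRadical R
  have : p.2 - p.1 = -(p.1 - p.2) := by abel
  rw [this]; exact zr_neg hp

/-- coordinate swap of a set of pairs -/
def swapSet (J : Set (R × R)) : Set (R × R) := {p | ((p.2, p.1) : R × R) ∈ J}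

lemma swapSet_swapSet (J : Set (R × R)) : swapSet (swapSet J) = J := by
  ext p
  show ((p.1, p.2) : R × R) ∈ J ↔ p ∈ J
  rw [Prod.mk.eta]

lemma swapSet_SP : swapSet (SP R) = SP R := by
  ext p
  constructor
  · intro h
    have := SP_swap (p := ((p.2, p.1) : R × R)) h
    simpa using this
  · exact fun h => SP_swap h

lemma swapSet_zero : swapSet ({0} : Set (R × R)) = ({0} : Set (R × R)) := by
  ext p
  show ((p.2, p.1) : R × R) ∈ ({0} : Set (R × R)) ↔ _
  simp [Prod.ext_iff, and_comm]

lemma swapSet_inter (A B : Set (R × R)) : swapSet (A ∩ B) = swapSet A ∩ swapSet B := rfl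

lemma IsRI_swap {J : Set (R × R)} (h : IsRI (SP R) J) : IsRI (SP R) (swapSet J) := by
  obtain ⟨hs, h0, hadd, hneg, hmul⟩ := h
  refine ⟨?_, ?_, ?_, ?_, ?_⟩
  · intro p hp
    have := hs hp
    have h2 := SP_swap this
    simpa using h2
  · show (((0 : R), (0 : R)) : R × R) ∈ J
    exact h0
  · intro a ha b hb
    show (((a + b).2, (a + b).1) : R × R) ∈ J
    have := hadd _ ha _ hb
    simpa [Prod.mk_add_mk] using this
  · intro a ha
    show (((-a).2, (-a).1) : R × R) ∈ J
    have := hneg _ ha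
    simpa [Prod.neg_mk] using this
  · intro a ha y hy
    show (((a * y).2, (a * y).1) : R × R) ∈ J
    have := hmul _ ha ((y.2, y.1) : R × R) (SP_swap hy)
    simpa [Prod.mk_mul_mk] using this

lemma IsMaxRI_swap {J : Set (R × R)} (h : IsMaxRI (SP R) J) : IsMaxRI (SP R) (swapSet J) := by
  obtain ⟨hRI, hne, htop⟩ := h
  refine ⟨IsRI_swap hRI, ?_, ?_⟩
  · intro heq
    apply hne
    have := congrArg swapSet heq
    rwa [swapSet_swapSet, swapSet_SP] at this
  · intro K hK hsub
    have hsub' : J ⊆ swapSet K := by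
      intro p hp
      show ((p.2, p.1) : R × R) ∈ K
      apply hsub
      show ((p.1, p.2) : R × R) ∈ J
      rwa [Prod.mk.eta]
    rcases htop (swapSet K) (IsRI_swap hK) hsub' with h1 | h1
    · left
      have := congrArg swapSet h1
      rwa [swapSet_swapSet] at this
    · right
      have := congrArg swapSet h1
      rwa [swapSet_swapSet, swapSet_SP] at this

lemma IsEssRI_swap {J : Set (R × R)} (h : IsEssRI (SP R) J) : IsEssRI (SP R) (swapSet J) := by
  intro K hK hKne hinter
  have hKne' : swapSet K ≠ ({0} : Set (R × R)) := by
    intro heq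
    apply hKne
    have := congrArg swapSet heq
    rwa [swapSet_swapSet, swapSet_zero] at this
  apply h (swapSet K) (IsRI_swap hK) hKne'
  have := congrArg swapSet hinter
  rwa [swapSet_inter, swapSet_swapSet, swapSet_zero] at this

lemma key1 {J : Set (R × R)} (hmax : IsMaxRI (SP R) J) (hess : IsEssRI (SP R) J)
    {d : R} (hd : d ∈ zhouRadical R) : ((d, (0 : R)) : R × R) ∈ J := by
  have := key2 (IsMaxRI_swap hmax) (IsEssRI_swap hess) hd
  exact this

/-- first projection of a right ideal of `SP R`, as a submodule of `R` -/
def projSub (K : Set (R × R)) (hK : IsRI (SP R) K) : Submodule Rᵐᵒᵖ R where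
  carrier := {x | ∃ y, ((x, y) : R × R) ∈ K}
  add_mem' := by
    intro a b ha hb
    obtain ⟨y, hy⟩ := ha
    obtain ⟨y', hy'⟩ := hb
    refine ⟨y + y', ?_⟩
    have := hK.2.2.1 _ hy _ hy'
    simpa [Prod.mk_add_mk] using this
  zero_mem' := ⟨0, hK.2.1⟩
  smul_mem' := by
    intro m x hx
    obtain ⟨y, hy⟩ := hx
    refine ⟨y * m.unop, ?_⟩
    have := hK.2.2.2.2 _ hy ((m.unop, m.unop) : R × R) (SP_diag m.unop)
    simpa [Prod.mk_mul_mk] using this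

/-- The pullback of an essential maximal right ideal of `R` along the first projection. -/
lemma JI_facts (I : Submodule Rᵐᵒᵖ R) (hco : IsCoatom I) (hessI : IsEssentialRI R I) :
    IsMaxRI (SP R) {p | p ∈ SP R ∧ p.1 ∈ I} ∧ IsEssRI (SP R) {p | p ∈ SP R ∧ p.1 ∈ I} := by
  set JI : Set (R × R) := {p | p ∈ SP R ∧ p.1 ∈ I} with hJIdef
  have hSP0 : (0 : R × R) ∈ SP R := by
    show (0 : R × R).1 - (0 : R × R).2 ∈ zhouRadical R
    simpa using zr_zero
  have hRI : IsRI (SP R) JI := by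
    refine ⟨fun p hp => hp.1, ⟨hSP0, I.zero_mem⟩, ?_, ?_, ?_⟩
    · intro a ha b hb
      exact ⟨SP_add ha.1 hb.1, by rw [Prod.fst_add]; exact I.add_mem ha.2 hb.2⟩
    · intro a ha
      exact ⟨SP_neg ha.1, by rw [Prod.fst_neg]; exact I.neg_mem ha.2⟩
    · intro a ha y hy
      refine ⟨SP_mul ha.1 hy, ?_⟩
      show a.1 * y.1 ∈ I
      exact I.smul_mem (op y.1) ha.2
  have hone : (((1 : R), (1 : R)) : R × R) ∉ JI := by
    rintro ⟨-, h1⟩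
    exact hco.1 (Submodule.eq_top_iff'.mpr fun r => by simpa using I.smul_mem (op r) h1)
  have hne : JI ≠ SP R := by
    intro h
    exact hone (h ▸ SP_diag 1)
  have hmax : IsMaxRI (SP R) JI := by
    refine ⟨hRI, hne, ?_⟩
    intro K hK hsub
    by_cases hKeq : K = JI
    · exact Or.inl hKeq
    · right
      have hnsub : ¬ K ⊆ JI := fun h => hKeq (subset_antisymm h hsub)
      obtain ⟨p, hpK, hpJ⟩ := Set.not_subset.mp hnsub
      have hpS : p ∈ SP R := hK.1 hpK
      have hp1 : p.1 ∉ I := fun h => hpJ ⟨hpS, h⟩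
      have hsup : I ⊔ Submodule.span Rᵐᵒᵖ {p.1} = ⊤ := by
        refine hco.2 _ ?_
        refine lt_of_le_of_ne le_sup_left fun h => hp1 ?_
        have : Submodule.span Rᵐᵒᵖ {p.1} ≤ I := by rw [h]; exact le_sup_right
        exact this (Submodule.mem_span_singleton_self _)
      obtain ⟨i, hi, y, hy, hiy⟩ :=
        Submodule.mem_sup.mp (hsup ▸ Submodule.mem_top : (1 : R) ∈ _)
      obtain ⟨m, hm⟩ := Submodule.mem_span_singleton.mp hy
      -- 1 = i + p.1 * m.unop
      have h1eq : (1 : R) = i + p.1 * m.unop := by rw [← hm] at hiy; exact hiy.symm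
      set t := m.unop with htdef
      have hiI : i = 1 - p.1 * t := by rw [h1eq]; abel
      have hq1 : ((i, 1 - p.2 * t) : R × R) ∈ JI := by
        refine ⟨?_, hi⟩
        show i - (1 - p.2 * t) ∈ zhouRadical R
        rw [hiI]
        have : 1 - p.1 * t - (1 - p.2 * t) = -((p.1 - p.2) * t) := by noncomm_ring
        rw [this]
        exact zr_neg (zr_mulR hpS t)
      have hq2 : p * ((t, t) : R × R) ∈ K := hK.2.2.2.2 _ hpK _ (SP_diag t)
      have hsum : ((i, 1 - p.2 * t) : R × R) + p * ((t, t) : R × R)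
          = (((1 : R), (1 : R)) : R × R) := by
        have hpt : p * ((t, t) : R × R) = ((p.1 * t, p.2 * t) : R × R) := rfl
        rw [hpt, Prod.mk_add_mk]
        refine Prod.ext ?_ ?_
        · show i + p.1 * t = 1
          rw [hiI]; abel
        · show 1 - p.2 * t + p.2 * t = 1
          abel
      have h11K : (((1 : R), (1 : R)) : R × R) ∈ K := by
        rw [← hsum]
        exact hK.2.2.1 _ (hsub hq1) _ hq2
      refine subset_antisymm hK.1 fun y hy' => ?_
      have := hK.2.2.2.2 _ h11K _ hy'
      have hone_mul : (((1 : R), (1 : R)) : R × R) * y = y := by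
        show ((1 : R × R)) * y = y
        rw [one_mul]
      rwa [hone_mul] at this
  have hessJ : IsEssRI (SP R) JI := by
    intro K hK hKne hinter
    have hnsub : ¬ K ⊆ ({0} : Set (R × R)) := by
      intro h
      exact hKne (subset_antisymm h (by simpa using hK.2.1))
    obtain ⟨p, hpK, hp0⟩ := Set.not_subset.mp hnsub
    simp only [Set.mem_singleton_iff] at hp0
    have hmem : ∀ q : R × R, q ∈ JI ∩ K → q = 0 := by
      intro q hq
      have : q ∈ ({0} : Set (R × R)) := hinter ▸ hq
      simpa using this
    by_cases hp1 : p.1 = 0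
    · have hpJ : p ∈ JI := ⟨hK.1 hpK, by rw [hp1]; exact I.zero_mem⟩
      exact hp0 (hmem p ⟨hpJ, hpK⟩)
    · have hK1mem : ∀ x : R, x ∈ projSub K hK ↔ ∃ y, ((x, y) : R × R) ∈ K :=
        fun x => Iff.rfl
      set K1 : Submodule Rᵐᵒᵖ R := projSub K hK with hK1def
      have hK1ne : K1 ≠ ⊥ := by
        intro h
        apply hp1
        have hpmem : p.1 ∈ K1 := (hK1mem p.1).mpr ⟨p.2, by rwa [Prod.mk.eta]⟩
        rw [h] at hpmem
        simpa using hpmem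
      have := hessI K1 hK1ne
      rw [Submodule.ne_bot_iff] at this
      obtain ⟨x, ⟨hxI, hxK1⟩, hx0⟩ := this
      obtain ⟨y, hxyK⟩ := (hK1mem x).mp hxK1
      apply hx0
      have : ((x, y) : R × R) = 0 := hmem _ ⟨⟨hK.1 hxyK, hxI⟩, hxyK⟩
      exact (Prod.ext_iff.mp this).1
  exact ⟨hmax, hessJ⟩

end zhouAux


/-- A ring `R` is Zhou right `e`-reduced iff the subring
`S = {(r, s) ∈ R × R : r − s ∈ δ(R)}` is Zhou right `(e, e)`-reduced. -/
theorem zhou_right_e_reduced_iff_pullback (R : Type*) [Ring R]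
    (e : R) (he : IsIdempotentElem e) :
    (∀ a : R, IsNilpotent a → a * e ∈ zhouRadical R) ↔
      (∀ p : R × R, p ∈ {q : R × R | q.1 - q.2 ∈ zhouRadical R} → IsNilpotent p →
        p * ((e, e) : R × R) ∈ zhouSet {q : R × R | q.1 - q.2 ∈ zhouRadical R}) := by
  constructor
  · intro H p hp hnil
    obtain ⟨n, hn⟩ := hnil
    have h1 : IsNilpotent p.1 := ⟨n, by have := congrArg Prod.fst hn; simpa using this⟩
    have h2 : IsNilpotent p.2 := ⟨n, by have := congrArg Prod.snd hn; simpa using this⟩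
    have hre := H p.1 h1
    have hse := H p.2 h2
    refine ⟨?_, ?_⟩
    · show (p * ((e, e) : R × R)).1 - (p * ((e, e) : R × R)).2 ∈ zhouRadical R
      have heq : (p * ((e, e) : R × R)).1 - (p * ((e, e) : R × R)).2 = (p.1 - p.2) * e := by
        show p.1 * e - p.2 * e = _
        noncomm_ring
      rw [heq]
      exact zr_mulR hp e
    · intro J hmax hess
      have hmax' : IsMaxRI (SP R) J := hmax
      have hess' : IsEssRI (SP R) J := hess
      have heq : p * ((e, e) : R × R) = ((p.1 * e, (0 : R)) : R × R) + ((0 : R), p.2 * e) := by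
        rw [Prod.mk_add_mk]
        refine Prod.ext ?_ ?_ <;> simp
      rw [heq]
      exact hmax'.1.2.2.1 _ (key1 hmax' hess' hre) _ (key2 hmax' hess' hse)
  · intro H a han
    obtain ⟨n, hn⟩ := han
    have hnil : IsNilpotent ((a, a) : R × R) := ⟨n, by
      refine Prod.ext ?_ ?_ <;> simpa using hn⟩
    have hz := H (a, a) (SP_diag a) hnil
    intro I hco hessI
    obtain ⟨hmax, hess⟩ := JI_facts I hco hessI
    have hmem := hz.2 _ hmax hess
    exact hmem.2
end

section
/- Let R be Zhou right e-reduced and I a nil ideal of R. Then R/I is Zhou right (e+I)-reduced: for any a ∈ R with a + I nilpotent in R/I, (a+I)(e+I) ∈ δ(R/I). -/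
open MulOpposite

section aux
variable {R S : Type*} [Ring R] [Ring S] (f : R →+* S)

def RIcomap (J : Submodule Sᵐᵒᵖ S) : Submodule Rᵐᵒᵖ R where
  carrier := f ⁻¹' J
  add_mem' ha hb := by
    simp only [Set.mem_preimage, map_add] at *; exact J.add_mem ha hb
  zero_mem' := by simp [J.zero_mem]
  smul_mem' r x hx := by
    simp only [Set.mem_preimage] at *
    have h1 : f (r • x) = op (f r.unop) • f x := by
      simp [MulOpposite.smul_eq_mul_unop]
    rw [h1]; exact J.smul_mem _ hx

lemma mem_RIcomap {J : Submodule Sᵐᵒᵖ S} {x : R} : x ∈ RIcomap f J ↔ f x ∈ J := Iff.rfl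

def RImap (hf : Function.Surjective f) (K : Submodule Rᵐᵒᵖ R) : Submodule Sᵐᵒᵖ S where
  carrier := f '' K
  add_mem' := by
    rintro _ _ ⟨x, hx, rfl⟩ ⟨y, hy, rfl⟩
    exact ⟨x + y, K.add_mem hx hy, map_add f x y⟩
  zero_mem' := ⟨0, K.zero_mem, map_zero f⟩
  smul_mem' s := by
    rintro _ ⟨x, hx, rfl⟩
    obtain ⟨r, hr⟩ := hf s.unop
    exact ⟨x * r, K.smul_mem (op r) hx, by
      simp [MulOpposite.smul_eq_mul_unop, hr]⟩

lemma mem_RImap {hf : Function.Surjective f} {K : Submodule Rᵐᵒᵖ R} {y : S} :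
    y ∈ RImap f hf K ↔ ∃ x ∈ K, f x = y := Iff.rfl

lemma one_mem_iff_top (J : Submodule Sᵐᵒᵖ S) : (1 : S) ∈ J ↔ J = ⊤ := by
  constructor
  · intro h1
    ext x
    simp only [Submodule.mem_top, iff_true]
    have := J.smul_mem (op x) h1
    simpa [MulOpposite.smul_eq_mul_unop] using this
  · rintro rfl; trivial

lemma ker_le_RIcomap (J : Submodule Sᵐᵒᵖ S) {x : R} (hx : f x = 0) : x ∈ RIcomap f J := by
  rw [mem_RIcomap, hx]; exact J.zero_mem

lemma RIcomap_coatom (hf : Function.Surjective f) {J : Submodule Sᵐᵒᵖ S}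
    (hJ : IsCoatom J) : IsCoatom (RIcomap f J) := by
  constructor
  · intro h
    apply hJ.1
    rw [← one_mem_iff_top]
    have : (1 : R) ∈ RIcomap f J := by rw [h]; trivial
    simpa [mem_RIcomap] using this
  · intro M hM
    have hJM : J < RImap f hf M := by
      constructor
      · intro y hy
        obtain ⟨x, rfl⟩ := hf y
        exact ⟨x, hM.le (mem_RIcomap f |>.mpr hy), rfl⟩
      · intro hle
        obtain ⟨m, hmM, hmJ⟩ := SetLike.exists_of_lt hM
        exact hmJ (hle ⟨m, hmM, rfl⟩)
    have htop := hJ.2 _ hJM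
    ext x
    simp only [Submodule.mem_top, iff_true]
    have : f x ∈ RImap f hf M := by rw [htop]; trivial
    obtain ⟨m, hmM, hm⟩ := this
    have hxm : x - m ∈ RIcomap f J := ker_le_RIcomap f J (by simp [hm])
    have := M.add_mem (hM.le hxm) hmM
    simpa using this

lemma RIcomap_essential (hf : Function.Surjective f) {J : Submodule Sᵐᵒᵖ S}
    (hJ : IsEssentialRI S J) : IsEssentialRI R (RIcomap f J) := by
  intro K hK
  by_cases hKf : RIcomap f (⊥ : Submodule Sᵐᵒᵖ S) ⊓ K = ⊥
  · have hmapK : RImap f hf K ≠ ⊥ := by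
      intro hbot
      apply hK
      ext x
      simp only [Submodule.mem_bot]
      constructor
      · intro hx
        have : f x ∈ RImap f hf K := ⟨x, hx, rfl⟩
        rw [hbot] at this
        have : x ∈ RIcomap f (⊥ : Submodule Sᵐᵒᵖ S) ⊓ K :=
          ⟨by simpa [mem_RIcomap] using this, hx⟩
        rw [hKf] at this
        simpa using this
      · rintro rfl; exact K.zero_mem
    have := hJ _ hmapK
    rw [Submodule.ne_bot_iff] at this ⊢
    obtain ⟨y, ⟨hyJ, hyK⟩, hy0⟩ := this
    obtain ⟨x, hxK, rfl⟩ := hyK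
    refine ⟨x, ⟨(mem_RIcomap f).mpr hyJ, hxK⟩, ?_⟩
    rintro rfl
    exact hy0 (map_zero f)
  · rw [← Ne, Submodule.ne_bot_iff] at hKf
    rw [Submodule.ne_bot_iff]
    obtain ⟨x, ⟨hx1, hx2⟩, hx0⟩ := hKf
    exact ⟨x, ⟨ker_le_RIcomap f J (by simpa [mem_RIcomap] using hx1), hx2⟩, hx0⟩

lemma zhou_map (hf : Function.Surjective f) {x : R} (hx : x ∈ zhouRadical R) :
    f x ∈ zhouRadical S := fun J hc he =>
  hx (RIcomap f J) (RIcomap_coatom f hf hc) (RIcomap_essential f hf he)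

end aux

/-- If `R` is Zhou right `e`-reduced and `I` is a nil (two-sided) ideal of `R`,
then `R/I` is Zhou right `(e + I)`-reduced: whenever `a + I` is nilpotent in `R/I`,
`(a + I)(e + I) ∈ δ(R/I)`. -/
theorem quotient_by_nil_zhou_right_reduced (R : Type*) [Ring R]
    (e : R) (he : IsIdempotentElem e)
    (hred : ∀ a : R, IsNilpotent a → a * e ∈ zhouRadical R)
    (I : TwoSidedIdeal R) (hnil : ∀ x ∈ I, IsNilpotent x) :
    ∀ a : R, IsNilpotent (I.ringCon.mk' a) →
      I.ringCon.mk' a * I.ringCon.mk' e ∈ zhouRadical I.ringCon.Quotient := by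
  intro a ha
  have hsurj : Function.Surjective (I.ringCon.mk' : R →+* I.ringCon.Quotient) :=
    Quotient.mk''_surjective
  have hna : IsNilpotent a := by
    obtain ⟨n, hn⟩ := ha
    have hmem : a ^ n ∈ I := by
      rw [TwoSidedIdeal.mem_iff]
      have : I.ringCon.mk' (a ^ n) = I.ringCon.mk' 0 := by
        rw [map_pow, hn, map_zero]
      exact I.ringCon.eq.mp this
    obtain ⟨m, hm⟩ := hnil _ hmem
    exact ⟨n * m, by rw [pow_mul, hm]⟩
  have := zhou_map (I.ringCon.mk') hsurj (hred a hna)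
  simpa [map_mul] using this
end

section
/- Let R₁,…,Rₙ be rings with idempotents eᵢ ∈ Rᵢ, R = R₁ × ⋯ × Rₙ and e = (e₁,…,eₙ). Then each Rᵢ is Zhou right eᵢ-reduced if and only if R is Zhou right e-reduced. -/
open MulOpposite

section Aux

variable {ι : Type*} [Fintype ι] [DecidableEq ι] {Rs : ι → Type*} [∀ i, Ring (Rs i)]

lemma aux_mul_single (x : ∀ i, Rs i) (i : ι) (a : Rs i) :
    x * Pi.single i a = Pi.single i (x i * a) := by
  funext j
  rcases eq_or_ne j i with rfl | h
  · simp
  · simp [Pi.single_eq_of_ne h]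

lemma aux_single_mul (x : ∀ i, Rs i) (i : ι) (a : Rs i) :
    Pi.single i a * x = Pi.single i (a * x i) := by
  funext j
  rcases eq_or_ne j i with rfl | h
  · simp
  · simp [Pi.single_eq_of_ne h]

lemma aux_smul_apply (c : (∀ i, Rs i)ᵐᵒᵖ) (x : ∀ i, Rs i) (i : ι) :
    (c • x) i = op ((unop c) i) • x i := rfl

lemma aux_eq_top_of_one_mem {R : Type*} [Ring R] (I : Submodule Rᵐᵒᵖ R) (h : (1 : R) ∈ I) :
    I = ⊤ := by
  rw [Submodule.eq_top_iff']
  intro a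
  have := I.smul_mem (op a) h
  rwa [op_smul_eq_mul, one_mul] at this

/-- The `i`-th component right ideal of a right ideal of a product. -/
def compSub (J : Submodule (∀ i, Rs i)ᵐᵒᵖ (∀ i, Rs i)) (i : ι) :
    Submodule (Rs i)ᵐᵒᵖ (Rs i) where
  carrier := {a | Pi.single i a ∈ J}
  add_mem' {a b} ha hb := by
    have : Pi.single i (a + b) = Pi.single i a + Pi.single i b := by
      simp [Pi.single_add]
    simpa [Set.mem_setOf_eq, this] using J.add_mem ha hb
  zero_mem' := by simp [Set.mem_setOf_eq]
  smul_mem' c a ha := by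
    have h1 : Pi.single i (c • a) = op (Pi.single i (unop c)) • (Pi.single i a : ∀ j, Rs j) := by
      show _ = Pi.single i a * Pi.single i (unop c)
      rw [aux_single_mul, Pi.single_eq_same]
      rfl
    show Pi.single i (c • a) ∈ J
    rw [h1]
    exact J.smul_mem _ ha

lemma mem_compSub_iff (J : Submodule (∀ i, Rs i)ᵐᵒᵖ (∀ i, Rs i)) (i : ι) (a : Rs i) :
    a ∈ compSub J i ↔ Pi.single i a ∈ J := Iff.rfl

lemma single_mem_of_mem (J : Submodule (∀ i, Rs i)ᵐᵒᵖ (∀ i, Rs i)) {x : ∀ i, Rs i}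
    (hx : x ∈ J) (i : ι) : x i ∈ compSub J i := by
  rw [mem_compSub_iff]
  have : Pi.single i (x i) = op (Pi.single i (1 : Rs i)) • x := by
    rw [op_smul_eq_mul, aux_mul_single, mul_one]
  rw [this]
  exact J.smul_mem _ hx

lemma mem_iff_comp (J : Submodule (∀ i, Rs i)ᵐᵒᵖ (∀ i, Rs i)) (x : ∀ i, Rs i) :
    x ∈ J ↔ ∀ i, x i ∈ compSub J i := by
  constructor
  · exact fun hx i => single_mem_of_mem J hx i
  · intro h
    have hx : x = ∑ i, Pi.single i (x i) := (Finset.univ_sum_single x).symm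
    rw [hx]
    exact Submodule.sum_mem _ fun i _ => h i

/-- The lift of a right ideal of `Rs i` to the product. -/
def liftSub (i : ι) (I : Submodule (Rs i)ᵐᵒᵖ (Rs i)) :
    Submodule (∀ j, Rs j)ᵐᵒᵖ (∀ j, Rs j) where
  carrier := {x | x i ∈ I}
  add_mem' {a b} ha hb := I.add_mem ha hb
  zero_mem' := I.zero_mem
  smul_mem' c x hx := by
    have := aux_smul_apply c x i
    simpa [Set.mem_setOf_eq, this] using I.smul_mem (op ((unop c) i)) hx

lemma mem_liftSub_iff (i : ι) (I : Submodule (Rs i)ᵐᵒᵖ (Rs i)) (x : ∀ j, Rs j) :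
    x ∈ liftSub i I ↔ x i ∈ I := Iff.rfl

lemma liftSub_coatom (i : ι) (I : Submodule (Rs i)ᵐᵒᵖ (Rs i)) (hI : IsCoatom I) :
    IsCoatom (liftSub i I) := by
  constructor
  · intro h
    apply hI.1
    apply aux_eq_top_of_one_mem
    have : (1 : ∀ j, Rs j) ∈ liftSub i I := h ▸ Submodule.mem_top
    simpa [mem_liftSub_iff] using this
  · intro K hK
    obtain ⟨y, hyK, hyI⟩ := SetLike.exists_of_lt hK
    rw [mem_liftSub_iff] at hyI
    have hsup : I ⊔ Submodule.span (Rs i)ᵐᵒᵖ {y i} = ⊤ := by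
      apply hI.2
      rw [left_lt_sup]
      intro hle
      exact hyI (hle (Submodule.mem_span_singleton_self _))
    have h1 : (1 : Rs i) ∈ I ⊔ Submodule.span (Rs i)ᵐᵒᵖ {y i} := hsup ▸ Submodule.mem_top
    obtain ⟨m, hm, s, hs, hms⟩ := Submodule.mem_sup.1 h1
    obtain ⟨c, rfl⟩ := Submodule.mem_span_singleton.1 hs
    apply aux_eq_top_of_one_mem
    have hw1 : (Function.update (1 : ∀ j, Rs j) i m) ∈ K := by
      apply hK.le
      rw [mem_liftSub_iff]
      simpa using hm
    have hw2 : op (Pi.single i (unop c)) • y ∈ K := K.smul_mem _ hyK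
    have hcx : c • y i = y i * unop c := rfl
    have hsum : Function.update (1 : ∀ j, Rs j) i m + op (Pi.single i (unop c)) • y = 1 := by
      rw [op_smul_eq_mul, aux_mul_single]
      funext j
      rcases eq_or_ne j i with rfl | h
      · rw [Pi.add_apply, Function.update_self, Pi.single_eq_same, ← hcx, hms, Pi.one_apply]
      · simp [Function.update_of_ne h, Pi.single_eq_of_ne h]
    have := K.add_mem hw1 hw2
    rwa [hsum] at this

lemma liftSub_essential (i : ι) (I : Submodule (Rs i)ᵐᵒᵖ (Rs i))
    (hI : IsEssentialRI (Rs i) I) : IsEssentialRI (∀ j, Rs j) (liftSub i I) := by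
  intro K hK
  obtain ⟨x, hxK, hx0⟩ := (Submodule.ne_bot_iff K).1 hK
  rw [Submodule.ne_bot_iff]
  by_cases hcase : ∃ j, j ≠ i ∧ x j ≠ 0
  · obtain ⟨j, hji, hxj⟩ := hcase
    refine ⟨op (Pi.single j (1 : Rs j)) • x,
      Submodule.mem_inf.2 ⟨?_, K.smul_mem _ hxK⟩, ?_⟩
    · rw [mem_liftSub_iff, op_smul_eq_mul, aux_mul_single, mul_one, Pi.single_eq_of_ne (Ne.symm hji)]
      exact I.zero_mem
    · intro h
      apply hxj
      have := congrFun h j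
      rwa [op_smul_eq_mul, aux_mul_single, mul_one, Pi.single_eq_same, Pi.zero_apply] at this
  · push_neg at hcase
    have hxi : x i ≠ 0 := by
      intro h
      apply hx0
      funext j
      rcases eq_or_ne j i with rfl | hj
      · exact h
      · exact hcase j hj
    have hspan : Submodule.span (Rs i)ᵐᵒᵖ {x i} ≠ ⊥ :=
      (Submodule.ne_bot_iff _).2 ⟨x i, Submodule.mem_span_singleton_self _, hxi⟩
    obtain ⟨y, hy, hy0⟩ := (Submodule.ne_bot_iff _).1 (hI _ hspan)
    obtain ⟨hyI, hys⟩ := Submodule.mem_inf.1 hy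
    obtain ⟨c, rfl⟩ := Submodule.mem_span_singleton.1 hys
    have hcx : c • x i = x i * unop c := rfl
    refine ⟨op (Pi.single i (unop c)) • x,
      Submodule.mem_inf.2 ⟨?_, K.smul_mem _ hxK⟩, ?_⟩
    · rw [mem_liftSub_iff, op_smul_eq_mul, aux_mul_single, Pi.single_eq_same, ← hcx]
      exact hyI
    · intro h
      apply hy0
      have := congrFun h i
      rwa [op_smul_eq_mul, aux_mul_single, Pi.single_eq_same, Pi.zero_apply, ← hcx] at this

lemma comp_coatom (J : Submodule (∀ i, Rs i)ᵐᵒᵖ (∀ i, Rs i)) (hJ : IsCoatom J) :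
    ∃ i, IsCoatom (compSub J i) ∧ ∀ j, j ≠ i → compSub J j = ⊤ := by
  have hex : ∃ i, (1 : Rs i) ∉ compSub J i := by
    by_contra h
    push_neg at h
    apply hJ.1
    apply aux_eq_top_of_one_mem
    rw [mem_iff_comp]
    intro i
    simpa using h i
  obtain ⟨i, hi⟩ := hex
  have hsingle : Pi.single i (1 : Rs i) ∉ J := hi
  have hsup : J ⊔ Submodule.span (∀ j, Rs j)ᵐᵒᵖ {Pi.single i (1 : Rs i)} = ⊤ := by
    apply hJ.2
    rw [left_lt_sup]
    intro hle
    exact hsingle (hle (Submodule.mem_span_singleton_self _))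
  have h1 : (1 : ∀ j, Rs j) ∈ J ⊔ Submodule.span (∀ j, Rs j)ᵐᵒᵖ {Pi.single i (1 : Rs i)} :=
    hsup ▸ Submodule.mem_top
  obtain ⟨m, hm, s, hs, hms⟩ := Submodule.mem_sup.1 h1
  obtain ⟨c, rfl⟩ := Submodule.mem_span_singleton.1 hs
  have htop : ∀ j, j ≠ i → compSub J j = ⊤ := by
    intro j hji
    apply aux_eq_top_of_one_mem
    have hmj : m j = 1 := by
      have hcy : c • (Pi.single i (1 : Rs i) : ∀ k, Rs k)
          = Pi.single i ((1 : Rs i) * (unop c) i) := by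
        show Pi.single i (1 : Rs i) * unop c = _
        rw [aux_single_mul]
      have h2 := congrFun hms j
      rw [Pi.add_apply, hcy, Pi.single_eq_of_ne hji, add_zero] at h2
      simpa using h2
    have := single_mem_of_mem J hm j
    rwa [hmj] at this
  refine ⟨i, ⟨⟨hi ∘ fun h => h ▸ Submodule.mem_top, ?_⟩, htop⟩⟩
  intro K hK
  obtain ⟨a, haK, haI⟩ := SetLike.exists_of_lt hK
  have hlt : J < liftSub i K := by
    constructor
    · intro x hx
      exact hK.le (single_mem_of_mem J hx i)
    · intro hle
      apply haI
      have : (Pi.single i a : ∀ j, Rs j) ∈ liftSub i K := by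
        rw [mem_liftSub_iff, Pi.single_eq_same]; exact haK
      have := hle this
      exact this
  have := hJ.2 _ hlt
  apply aux_eq_top_of_one_mem
  have h1' : (1 : ∀ j, Rs j) ∈ liftSub i K := this ▸ Submodule.mem_top
  simpa [mem_liftSub_iff] using h1'

lemma comp_essential (J : Submodule (∀ i, Rs i)ᵐᵒᵖ (∀ i, Rs i))
    (hJ : IsEssentialRI (∀ i, Rs i) J) (i : ι) :
    IsEssentialRI (Rs i) (compSub J i) := by
  intro K hK
  obtain ⟨a, haK, ha0⟩ := (Submodule.ne_bot_iff K).1 hK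
  let K' : Submodule (∀ j, Rs j)ᵐᵒᵖ (∀ j, Rs j) :=
    { carrier := {x | ∃ b ∈ K, x = Pi.single i b}
      add_mem' := by
        rintro x y ⟨b, hb, rfl⟩ ⟨b', hb', rfl⟩
        exact ⟨b + b', K.add_mem hb hb', by simp [Pi.single_add]⟩
      zero_mem' := ⟨0, K.zero_mem, by simp⟩
      smul_mem' := by
        rintro c x ⟨b, hb, rfl⟩
        refine ⟨b * (unop c) i, ?_, ?_⟩
        · have := K.smul_mem (op ((unop c) i)) hb
          rwa [op_smul_eq_mul] at this
        · have hcb : c • (Pi.single i b : ∀ j, Rs j) = Pi.single i b * unop c := rfl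
          rw [hcb, aux_single_mul] }
  have hK' : K' ≠ ⊥ := by
    rw [Submodule.ne_bot_iff]
    refine ⟨Pi.single i a, ⟨a, haK, rfl⟩, ?_⟩
    intro h
    apply ha0
    have := congrFun h i
    rwa [Pi.single_eq_same, Pi.zero_apply] at this
  obtain ⟨z, hz, hz0⟩ := (Submodule.ne_bot_iff _).1 (hJ K' hK')
  obtain ⟨hzJ, b, hbK, rfl⟩ := Submodule.mem_inf.1 hz
  rw [Submodule.ne_bot_iff]
  refine ⟨b, Submodule.mem_inf.2 ⟨hzJ, hbK⟩, ?_⟩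
  intro h
  exact hz0 (by rw [h]; simp)

lemma aux_nilpotent_pi {a : ∀ i, Rs i} (h : ∀ i, IsNilpotent (a i)) : IsNilpotent a := by
  choose n hn using h
  refine ⟨Finset.univ.sup n, funext fun i => ?_⟩
  rw [Pi.pow_apply, Pi.zero_apply]
  exact pow_eq_zero_of_le (Finset.le_sup (Finset.mem_univ i)) (hn i)

lemma aux_nilpotent_single (i : ι) {a : Rs i} (h : IsNilpotent a) :
    IsNilpotent (Pi.single i a : ∀ j, Rs j) := by
  apply aux_nilpotent_pi
  intro j
  rcases eq_or_ne j i with rfl | hj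
  · rw [Pi.single_eq_same]; exact h
  · rw [Pi.single_eq_of_ne hj]; exact IsNilpotent.zero

end Aux

/-- Let `R₁, …, Rₙ` be finitely many rings with idempotents `eᵢ ∈ Rᵢ`, `R = ∏ Rᵢ` and
`e = (e₁, …, eₙ)`. Then each `Rᵢ` is Zhou right `eᵢ`-reduced iff `R` is Zhou right
`e`-reduced. -/
theorem prod_zhou_right_reduced_iff (ι : Type*) [Fintype ι] (Rs : ι → Type*)
    [∀ i, Ring (Rs i)] (e : ∀ i, Rs i) (he : ∀ i, IsIdempotentElem (e i)) :
    (∀ i, ∀ a : Rs i, IsNilpotent a → a * e i ∈ zhouRadical (Rs i)) ↔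
      (∀ a : (∀ i, Rs i), IsNilpotent a → a * e ∈ zhouRadical (∀ i, Rs i)) := by
  classical
  constructor
  · intro h a ha J hJc hJe
    obtain ⟨i, hci, hti⟩ := comp_coatom J hJc
    rw [mem_iff_comp]
    intro j
    rcases eq_or_ne j i with rfl | hj
    · have hnil : IsNilpotent (a j) := by
        obtain ⟨n, hn⟩ := ha
        exact ⟨n, by rw [← Pi.pow_apply, hn, Pi.zero_apply]⟩
      exact h j (a j) hnil (compSub J j) hci (comp_essential J hJe j)
    · rw [hti j hj]
      exact Submodule.mem_top
  · intro h i a ha I hIc hIe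
    have hA := h (Pi.single i a) (aux_nilpotent_single i ha) (liftSub i I)
      (liftSub_coatom i I hIc) (liftSub_essential i I hIe)
    rw [mem_liftSub_iff] at hA
    simpa using hA
end

section
/- If R is Zhou right e-reduced for an idempotent e, then the corner ring eRe is Zhou right f-reduced for every idempotent f ∈ eRe. In particular, eRe is Zhou right e-reduced, using δ(eRe) = eδ(R)e. -/
open MulOpposite

-- auxiliary
lemma corner_mul {R : Type*} [Ring R] {e x y : R} (he : IsIdempotentElem e)
    (hx : e * x * e = x) (hy : e * y * e = y) : e * (x * y) * e = x * y := by
  have hee : e * e = e := he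
  have h2 : ∀ z : R, e * (e * z) = e * z := fun z => by rw [← mul_assoc, hee]
  obtain ⟨x, rfl⟩ : ∃ x', x = e * x' * e := ⟨x, hx.symm⟩
  obtain ⟨y, rfl⟩ : ∃ y', y = e * y' * e := ⟨y, hy.symm⟩
  simp only [mul_assoc, h2, hee]

lemma corner_key {R : Type*} [Ring R] {e : R} (he : IsIdempotentElem e)
    {J : Set R} (hJmax : IsMaxRI {x : R | e * x * e = x} J)
    (hJess : IsEssRI {x : R | e * x * e = x} J) :
    ∀ x ∈ zhouRadical R, e * x * e ∈ J := by
  have hee : e * e = e := he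
  have h2 : ∀ z : R, e * (e * z) = e * z := fun z => by rw [← mul_assoc, hee]
  obtain ⟨⟨hJI, hJ0, hJadd, hJneg, hJmul⟩, hJne, hJmaxp⟩ := hJmax
  have heI : e * e * e = e := by rw [hee, hee]
  have h0I : e * (0:R) * e = 0 := by simp
  have hereI : ∀ r : R, e * (e * r * e) * e = e * r * e := fun r => by
    simp only [mul_assoc, h2, hee]
  have haddI : ∀ x y : R, e * x * e = x → e * y * e = y → e * (x + y) * e = x + y := by
    intro x y hx hy; rw [mul_add, add_mul, hx, hy]
  have hsmulI : ∀ (n : ℤ) (x : R), e * x * e = x → e * (n • x) * e = n • x := by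
    intro n x hx; rw [mul_smul_comm, smul_mul_assoc, hx]
  have hnegI : ∀ x : R, e * x * e = x → e * (-x) * e = -x := by
    intro x hx; rw [mul_neg, neg_mul, hx]
  have heJ : e ∉ J := by
    intro h
    apply hJne
    apply Set.Subset.antisymm hJI
    intro y hy
    obtain ⟨y', rfl⟩ : ∃ y', y = e * y' * e := ⟨y, hy.symm⟩
    have := hJmul e h _ (hereI y')
    simpa only [mul_assoc, h2] using this
  set T : Set (Submodule Rᵐᵒᵖ R) :=
    {N | (1 - e) ∈ N ∧ (∀ j ∈ J, j ∈ N) ∧ ∀ x ∈ N, e * x * e ∈ J} with hTdef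
  have hBspan : Submodule.span Rᵐᵒᵖ (J ∪ {1 - e}) ∈ T := by
    refine ⟨Submodule.subset_span (Or.inr rfl), fun j hj => Submodule.subset_span (Or.inl hj), ?_⟩
    intro x hx
    have key : ∀ r : R, e * (x * r) * e ∈ J := by
      induction hx using Submodule.span_induction with
      | mem y hy =>
        intro r
        rcases hy with hy | hy
        · obtain ⟨j, rfl⟩ : ∃ j, y = e * j * e := ⟨y, (hJI hy).symm⟩
          have heq : e * ((e * j * e) * r) * e = (e * j * e) * (e * r * e) := by
            simp only [mul_assoc, h2, hee]
          rw [heq]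
          exact hJmul _ hy _ (hereI r)
        · simp only [Set.mem_singleton_iff] at hy; subst hy
          have heq : e * ((1 - e) * r) * e = 0 := by
            simp only [sub_mul, mul_sub, one_mul, mul_assoc, h2, hee, sub_self, zero_mul, mul_zero]
          rw [heq]; exact hJ0
      | zero => intro r; simpa using hJ0
      | add x y hx hy ihx ihy =>
        intro r
        have := hJadd _ (ihx r) _ (ihy r)
        simpa only [add_mul, mul_add] using this
      | smul c x hx ih =>
        intro r
        obtain ⟨c, rfl⟩ : ∃ c', c = op c' := ⟨c.unop, rfl⟩
        rw [op_smul_eq_mul]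
        have := ih (c * r)
        simpa only [mul_assoc] using this
    have := key 1
    simpa using this
  obtain ⟨N, hBN, hNT, hNmax⟩ := zorn_le_nonempty₀ T (by
      intro c hcT hchain y hy
      refine ⟨sSup c, ⟨?_, ?_, ?_⟩, fun z hz => le_sSup hz⟩
      · exact (le_sSup hy) (hcT hy).1
      · exact fun j hj => (le_sSup hy) ((hcT hy).2.1 j hj)
      · intro x hx
        obtain ⟨p, hpc, hxp⟩ := (Submodule.mem_sSup_of_directed ⟨y, hy⟩ hchain.directedOn).mp hx
        exact (hcT hpc).2.2 x hxp) _ hBspan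
  obtain ⟨hN1, hN2, hN3⟩ := hNT
  have hclose : ∀ w : R, (∀ r : R, e * (w * r) * e ∈ J) → w ∈ N := by
    intro w hw
    have hT' : N ⊔ Submodule.span Rᵐᵒᵖ {w} ∈ T := by
      refine ⟨Submodule.mem_sup_left hN1, fun j hj => Submodule.mem_sup_left (hN2 j hj), ?_⟩
      intro x hx
      obtain ⟨n, hn, z, hz, rfl⟩ := Submodule.mem_sup.mp hx
      obtain ⟨c, rfl⟩ := Submodule.mem_span_singleton.mp hz
      obtain ⟨c, rfl⟩ : ∃ c', c = op c' := ⟨c.unop, rfl⟩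
      rw [op_smul_eq_mul]
      have heq : e * (n + w * c) * e = e * n * e + e * (w * c) * e := by
        simp only [mul_add, add_mul]
      rw [heq]
      exact hJadd _ (hN3 n hn) _ (hw c)
    have hle := hNmax hT' le_sup_left
    exact hle (Submodule.mem_sup_right (Submodule.mem_span_singleton_self w))
  have hNtop : N ≠ ⊤ := by
    intro h
    apply heJ
    have : e ∈ N := h ▸ Submodule.mem_top
    have := hN3 e this
    rwa [hee, hee] at this
  have hcoatom : IsCoatom N := by
    refine ⟨hNtop, ?_⟩
    intro N'' hlt
    by_contra hne''
    have hN''T : N'' ∉ T := fun h => hlt.not_ge (hNmax h hlt.le)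
    have hy : ∃ y ∈ N'', e * y * e ∉ J := by
      by_contra hcon
      push_neg at hcon
      exact hN''T ⟨hlt.le hN1, fun j hj => hlt.le (hN2 j hj), hcon⟩
    obtain ⟨y, hyN, hyJ⟩ := hy
    set u := e * y * e with hu
    set K : Set R := {x | ∃ j ∈ J, ∃ t, e * t * e = t ∧ ∃ n : ℤ, x = j + u * t + n • u}
      with hKdef
    have hKRI : IsRI {x : R | e * x * e = x} K := by
      refine ⟨?_, ⟨0, hJ0, 0, h0I, 0, by simp⟩, ?_, ?_, ?_⟩
      · rintro x ⟨j, hj, t, ht, n, rfl⟩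
        have hut : e * (u * t) * e = u * t := corner_mul he (hereI y) ht
        exact haddI _ _ (haddI _ _ (hJI hj) hut) (hsmulI n u (hereI y))
      · rintro x ⟨j1, h1, t1, ht1, n1, rfl⟩ y' ⟨j2, h2', t2, ht2, n2, rfl⟩
        refine ⟨j1 + j2, hJadd _ h1 _ h2', t1 + t2, haddI _ _ ht1 ht2, n1 + n2, ?_⟩
        rw [mul_add, add_smul]; abel
      · rintro x ⟨j, hj, t, ht, n, rfl⟩
        refine ⟨-j, hJneg _ hj, -t, hnegI _ ht, -n, ?_⟩
        rw [mul_neg, neg_smul]; abel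
      · rintro x ⟨j, hj, t, ht, n, rfl⟩ y' hy'
        refine ⟨j * y', hJmul _ hj _ hy', t * y' + n • y',
          haddI _ _ (corner_mul he ht hy') (hsmulI n y' hy'), 0, ?_⟩
        simp only [add_mul, mul_add, mul_assoc, smul_mul_assoc, mul_smul_comm, zero_smul, add_zero]; abel
    have hJK : J ⊆ K := fun j hj => ⟨j, hj, 0, h0I, 0, by simp⟩
    have huK : u ∈ K := ⟨0, hJ0, 0, h0I, 1, by simp⟩
    have hKI : K = {x : R | e * x * e = x} := by
      rcases hJmaxp K hKRI hJK with h | h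
      · exact absurd (h ▸ huK) hyJ
      · exact h
    have heK : e ∈ K := by rw [hKI]; exact heI
    obtain ⟨j, hj, t, ht, n, hjtn⟩ := heK
    have hzN'' : y * t + n • y ∈ N'' := by
      refine N''.add_mem ?_ (zsmul_mem hyN n)
      have := N''.smul_mem (op t) hyN
      rwa [op_smul_eq_mul] at this
    have hez : e * (y * t + n • y) * e = u * t + n • u := by
      obtain ⟨t', rfl⟩ : ∃ t'', t = e * t'' * e := ⟨t, ht.symm⟩
      simp only [hu, mul_add, add_mul, mul_smul_comm, smul_mul_assoc, mul_assoc, h2, hee]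
    have hkey : ∀ z r : R, e * ((e - z * e) * r) * e = (e - e * z * e) * (e * r * e) := by
      intro z r
      simp only [sub_mul, mul_sub, mul_assoc, h2, hee]
    have hj2 : e - e * (y * t + n • y) * e = j := by
      rw [hez, hjtn]; abel
    have hwN : e - (y * t + n • y) * e ∈ N := by
      apply hclose
      intro r
      rw [hkey _ r, hj2]
      exact hJmul _ hj _ (hereI r)
    have hzeN'' : (y * t + n • y) * e ∈ N'' := by
      have := N''.smul_mem (op e) hzN''
      rwa [op_smul_eq_mul] at this
    have heN'' : e ∈ N'' := by
      have := N''.add_mem (hlt.le hwN) hzeN''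
      simpa using this
    have h1N'' : (1 : R) ∈ N'' := by
      have := N''.add_mem (hlt.le hN1) heN''
      simpa using this
    exact hne'' (Submodule.eq_top_iff'.mpr fun r => by
      have := N''.smul_mem (op r) h1N''
      rwa [op_smul_eq_mul, one_mul] at this)
  have hess : IsEssentialRI R N := by
    intro K' hK'ne hbot
    by_cases hc : ∀ k ∈ K', e * k * e = (0 : R)
    · have hle : K' ≤ N := by
        intro k hk
        apply hclose
        intro r
        have hkr : k * r ∈ K' := by
          have := K'.smul_mem (op r) hk
          rwa [op_smul_eq_mul] at this
        rw [hc _ hkr]; exact hJ0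
      apply hK'ne
      rw [← inf_eq_right.mpr hle]; exact hbot
    · push_neg at hc
      set EK : Set R := {x | ∃ k ∈ K', x = e * k * e} with hEKdef
      have hEKRI : IsRI {x : R | e * x * e = x} EK := by
        refine ⟨?_, ⟨0, K'.zero_mem, by simp⟩, ?_, ?_, ?_⟩
        · rintro x ⟨k, hk, rfl⟩; exact hereI k
        · rintro x ⟨k1, h1, rfl⟩ y' ⟨k2, h2', rfl⟩
          exact ⟨k1 + k2, K'.add_mem h1 h2', by rw [mul_add, add_mul]⟩
        · rintro x ⟨k, hk, rfl⟩
          exact ⟨-k, K'.neg_mem hk, by rw [mul_neg, neg_mul]⟩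
        · rintro x ⟨k, hk, rfl⟩ y' hy'
          refine ⟨k * (e * y'), ?_, ?_⟩
          · have := K'.smul_mem (op (e * y')) hk
            rwa [op_smul_eq_mul] at this
          · obtain ⟨y'', rfl⟩ : ∃ y'', y' = e * y'' * e := ⟨y', hy'.symm⟩
            simp only [mul_assoc, h2, hee]
      have hEKne : EK ≠ ({0} : Set R) := by
        obtain ⟨k0, hk0, hk0ne⟩ := hc
        intro h
        apply hk0ne
        have : e * k0 * e ∈ EK := ⟨k0, hk0, rfl⟩
        rwa [h, Set.mem_singleton_iff] at this
      have hJEK := hJess EK hEKRI hEKne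
      have hsub : ¬(J ∩ EK ⊆ {0}) := by
        intro hs
        exact hJEK (Set.Subset.antisymm hs
          (Set.singleton_subset_iff.mpr ⟨hJ0, 0, K'.zero_mem, by simp⟩))
      obtain ⟨v, hv, hvne⟩ := Set.not_subset.mp hsub
      rw [Set.mem_singleton_iff] at hvne
      obtain ⟨hvJ, k, hk, rfl⟩ := hv
      have hkeN : k * e ∈ N := by
        apply hclose
        intro r
        have heq : e * ((k * e) * r) * e = (e * k * e) * (e * r * e) := by
          simp only [mul_assoc, h2, hee]
        rw [heq]
        exact hJmul _ hvJ _ (hereI r)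
      have hkeK' : k * e ∈ K' := by
        have := K'.smul_mem (op e) hk
        rwa [op_smul_eq_mul] at this
      have hmem : k * e ∈ N ⊓ K' := ⟨hkeN, hkeK'⟩
      rw [hbot, Submodule.mem_bot] at hmem
      apply hvne
      rw [mul_assoc, hmem, mul_zero]
  intro x hx
  exact hN3 x (hx N hcoatom hess)

/-- If `R` is Zhou right `e`-reduced for an idempotent `e`, then the corner ring
`eRe = {x : R | e * x * e = x}` is Zhou right `f`-reduced for every idempotent
`f ∈ eRe`: every nilpotent `a ∈ eRe` satisfies `a * f ∈ δ(eRe)`. -/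
theorem corner_zhou_right_reduced (R : Type*) [Ring R]
    (e : R) (he : IsIdempotentElem e)
    (hred : ∀ a : R, IsNilpotent a → a * e ∈ zhouRadical R)
    (f : R) (hfmem : e * f * e = f) (hf : IsIdempotentElem f) :
    ∀ a : R, e * a * e = a → IsNilpotent a →
      a * f ∈ zhouSet {x : R | e * x * e = x} := by
  intro a haI hnil
  have hee : e * e = e := he
  have haR : a ∈ zhouRadical R := by
    have h := hred a hnil
    have hae : a * e = a := by
      conv_lhs => rw [← haI]
      rw [mul_assoc, hee, haI]
    rwa [hae] at h
  refine ⟨corner_mul he haI hfmem, ?_⟩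
  intro J hJmax hJess
  have haJ : a ∈ J := by
    have := corner_key he hJmax hJess a haR
    rwa [haI] at this
  exact hJmax.1.2.2.2.2 a haJ f hfmem
end

section
/- Let R be a ring and s a central element, and let Kₛ(R) be the generalized matrix ring on 2×2 matrices over R with multiplication [a₁ x₁; y₁ b₁][a₂ x₂; y₂ b₂] = [a₁a₂ + s x₁y₂, a₁x₂ + x₁b₂; y₁a₂ + b₁y₂, s y₁x₂ + b₁b₂]. For s = 0, a matrix A = [a x; y b] ∈ K₀(R) is nilpotent if and only if a and b are nilpotent in R. -/
/-- Multiplication of the generalized matrix ring `Kₛ(R)`: an element `[a x; y b]` is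
encoded as the quadruple `(a, x, y, b)`, and
`[a₁ x₁; y₁ b₁][a₂ x₂; y₂ b₂] =
  [a₁a₂ + s·x₁y₂, a₁x₂ + x₁b₂; y₁a₂ + b₁y₂, s·y₁x₂ + b₁b₂]`. -/
def ksMul {R : Type*} [Ring R] (s : R) (A B : R × R × R × R) : R × R × R × R :=
  (A.1 * B.1 + s * A.2.1 * B.2.2.1,
   A.1 * B.2.1 + A.2.1 * B.2.2.2,
   A.2.2.1 * B.1 + A.2.2.2 * B.2.2.1,
   s * A.2.2.1 * B.2.1 + A.2.2.2 * B.2.2.2)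

/-- Powers in the generalized matrix ring `Kₛ(R)`, the identity being `[1 0; 0 1]`. -/
def ksPow {R : Type*} [Ring R] (s : R) (A : R × R × R × R) : ℕ → R × R × R × R
  | 0 => (1, 0, 0, 1)
  | n + 1 => ksMul s (ksPow s A n) A

lemma ks_fst {R : Type*} [Ring R] (A : R × R × R × R) (n : ℕ) :
    (ksPow (0 : R) A n).1 = A.1 ^ n := by
  induction n with
  | zero => simp [ksPow]
  | succ n ih => simp [ksPow, ksMul, ih, pow_succ]

lemma ks_last {R : Type*} [Ring R] (A : R × R × R × R) (n : ℕ) :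
    (ksPow (0 : R) A n).2.2.2 = A.2.2.2 ^ n := by
  induction n with
  | zero => simp [ksPow]
  | succ n ih => simp [ksPow, ksMul, ih, pow_succ]

lemma ks_x {R : Type*} [Ring R] (A : R × R × R × R) (n : ℕ) :
    (ksPow (0 : R) A n).2.1 =
      ∑ j ∈ Finset.range n, A.1 ^ (n - 1 - j) * A.2.1 * A.2.2.2 ^ j := by
  induction n with
  | zero => simp [ksPow]
  | succ n ih =>
    rw [Finset.sum_range_succ']
    simp only [ksPow, ksMul, ih, ks_fst]
    rw [Finset.sum_mul]
    simp only [pow_succ, Nat.succ_sub_one, pow_zero, mul_one]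
    rw [add_comm]
    congr 1
    apply Finset.sum_congr rfl
    intro j hj
    rw [Finset.mem_range] at hj
    have : n - (j + 1) = n - 1 - j := by omega
    rw [this, mul_assoc]

lemma ks_y {R : Type*} [Ring R] (A : R × R × R × R) (n : ℕ) :
    (ksPow (0 : R) A n).2.2.1 =
      ∑ j ∈ Finset.range n, A.2.2.2 ^ (n - 1 - j) * A.2.2.1 * A.1 ^ j := by
  induction n with
  | zero => simp [ksPow]
  | succ n ih =>
    rw [Finset.sum_range_succ']
    simp only [ksPow, ksMul, ih, ks_last]
    rw [Finset.sum_mul]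
    simp only [pow_succ, Nat.succ_sub_one, pow_zero, mul_one]
    congr 1
    apply Finset.sum_congr rfl
    intro j hj
    rw [Finset.mem_range] at hj
    have : n - (j + 1) = n - 1 - j := by omega
    rw [this, mul_assoc]
/-- In `K₀(R)`, a matrix `A = [a x; y b]` is nilpotent iff `a` and `b` are nilpotent
in `R`. -/
theorem k0_nilpotent_iff (R : Type*) [Ring R] (A : R × R × R × R) :
    (∃ n : ℕ, 0 < n ∧ ksPow (0 : R) A n = ((0 : R), (0 : R), (0 : R), (0 : R))) ↔
      IsNilpotent A.1 ∧ IsNilpotent A.2.2.2 := by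
  constructor
  · rintro ⟨n, hn, h⟩
    refine ⟨⟨n, ?_⟩, ⟨n, ?_⟩⟩
    · rw [← ks_fst A n, h]
    · rw [← ks_last A n, h]
  · rintro ⟨⟨m, hm⟩, ⟨k, hk⟩⟩
    refine ⟨m + k + 1, Nat.succ_pos _, ?_⟩
    have hfst : (ksPow (0 : R) A (m + k + 1)).1 = 0 := by
      rw [ks_fst]; exact pow_eq_zero_of_le (by omega) hm
    have hlast : (ksPow (0 : R) A (m + k + 1)).2.2.2 = 0 := by
      rw [ks_last]; exact pow_eq_zero_of_le (by omega) hk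
    have hx : (ksPow (0 : R) A (m + k + 1)).2.1 = 0 := by
      rw [ks_x]
      apply Finset.sum_eq_zero
      intro j hj
      rw [Finset.mem_range] at hj
      rcases le_or_gt k j with h | h
      · rw [pow_eq_zero_of_le h hk, mul_zero]
      · rw [pow_eq_zero_of_le (show m ≤ m + k + 1 - 1 - j by omega) hm,
          zero_mul, zero_mul]
    have hy : (ksPow (0 : R) A (m + k + 1)).2.2.1 = 0 := by
      rw [ks_y]
      apply Finset.sum_eq_zero
      intro j hj
      rw [Finset.mem_range] at hj
      rcases le_or_gt m j with h | h
      · rw [pow_eq_zero_of_le h hm, mul_zero]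
      · rw [pow_eq_zero_of_le (show k ≤ m + k + 1 - 1 - j by omega) hk,
          zero_mul, zero_mul]
    exact Prod.ext hfst (Prod.ext hx (Prod.ext hy hlast))
end
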